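/- The real Jacobian determinant of the map ℂ²×ℂ → ℂ³, (z,w,μ) ↦ (z²−μconj(w)², zw+conj(z)conj(w)μ, w²−μconj(z)²), restricted appropriately, is 4(1−|μ|²)(|z|²+|w|²)⁴; in particular the map is an immersion at every point with |μ| < 1 and (z,w) ≠ (0,0). -/

import Mathlib

set_option maxHeartbeats 4000000
set_option maxRecDepth 100000
set_option linter.unreachableTactic false
set_option linter.unusedVariables false
set_option linter.unnecessarySeqFocus false

open Complex

theorem sa3_0_0 : Fin.succAbove (0 : Fin 3) (0 : Fin 2) = (1 : Fin 3) := by decide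
theorem sa3_0_1 : Fin.succAbove (0 : Fin 3) (1 : Fin 2) = (2 : Fin 3) := by decide
theorem sa3_1_0 : Fin.succAbove (1 : Fin 3) (0 : Fin 2) = (0 : Fin 3) := by decide
theorem sa3_1_1 : Fin.succAbove (1 : Fin 3) (1 : Fin 2) = (2 : Fin 3) := by decide
theorem sa3_2_0 : Fin.succAbove (2 : Fin 3) (0 : Fin 2) = (0 : Fin 3) := by decide
theorem sa3_2_1 : Fin.succAbove (2 : Fin 3) (1 : Fin 2) = (1 : Fin 3) := by decide
theorem fs3_0 : Fin.succ (0 : Fin 2) = (1 : Fin 3) := by decide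
theorem fc3_0 : Fin.castSucc (0 : Fin 2) = (0 : Fin 3) := by decide
theorem fs3_1 : Fin.succ (1 : Fin 2) = (2 : Fin 3) := by decide
theorem fc3_1 : Fin.castSucc (1 : Fin 2) = (1 : Fin 3) := by decide
theorem fv3_0 : ((0 : Fin 3) : ℕ) = 0 := by decide
theorem fv3_1 : ((1 : Fin 3) : ℕ) = 1 := by decide
theorem fv3_2 : ((2 : Fin 3) : ℕ) = 2 := by decide
theorem sa4_0_0 : Fin.succAbove (0 : Fin 4) (0 : Fin 3) = (1 : Fin 4) := by decide
theorem sa4_0_1 : Fin.succAbove (0 : Fin 4) (1 : Fin 3) = (2 : Fin 4) := by decide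
theorem sa4_0_2 : Fin.succAbove (0 : Fin 4) (2 : Fin 3) = (3 : Fin 4) := by decide
theorem sa4_1_0 : Fin.succAbove (1 : Fin 4) (0 : Fin 3) = (0 : Fin 4) := by decide
theorem sa4_1_1 : Fin.succAbove (1 : Fin 4) (1 : Fin 3) = (2 : Fin 4) := by decide
theorem sa4_1_2 : Fin.succAbove (1 : Fin 4) (2 : Fin 3) = (3 : Fin 4) := by decide
theorem sa4_2_0 : Fin.succAbove (2 : Fin 4) (0 : Fin 3) = (0 : Fin 4) := by decide
theorem sa4_2_1 : Fin.succAbove (2 : Fin 4) (1 : Fin 3) = (1 : Fin 4) := by decide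
theorem sa4_2_2 : Fin.succAbove (2 : Fin 4) (2 : Fin 3) = (3 : Fin 4) := by decide
theorem sa4_3_0 : Fin.succAbove (3 : Fin 4) (0 : Fin 3) = (0 : Fin 4) := by decide
theorem sa4_3_1 : Fin.succAbove (3 : Fin 4) (1 : Fin 3) = (1 : Fin 4) := by decide
theorem sa4_3_2 : Fin.succAbove (3 : Fin 4) (2 : Fin 3) = (2 : Fin 4) := by decide
theorem fs4_0 : Fin.succ (0 : Fin 3) = (1 : Fin 4) := by decide
theorem fc4_0 : Fin.castSucc (0 : Fin 3) = (0 : Fin 4) := by decide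
theorem fs4_1 : Fin.succ (1 : Fin 3) = (2 : Fin 4) := by decide
theorem fc4_1 : Fin.castSucc (1 : Fin 3) = (1 : Fin 4) := by decide
theorem fs4_2 : Fin.succ (2 : Fin 3) = (3 : Fin 4) := by decide
theorem fc4_2 : Fin.castSucc (2 : Fin 3) = (2 : Fin 4) := by decide
theorem fv4_0 : ((0 : Fin 4) : ℕ) = 0 := by decide
theorem fv4_1 : ((1 : Fin 4) : ℕ) = 1 := by decide
theorem fv4_2 : ((2 : Fin 4) : ℕ) = 2 := by decide
theorem fv4_3 : ((3 : Fin 4) : ℕ) = 3 := by decide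
theorem sa5_0_0 : Fin.succAbove (0 : Fin 5) (0 : Fin 4) = (1 : Fin 5) := by decide
theorem sa5_0_1 : Fin.succAbove (0 : Fin 5) (1 : Fin 4) = (2 : Fin 5) := by decide
theorem sa5_0_2 : Fin.succAbove (0 : Fin 5) (2 : Fin 4) = (3 : Fin 5) := by decide
theorem sa5_0_3 : Fin.succAbove (0 : Fin 5) (3 : Fin 4) = (4 : Fin 5) := by decide
theorem sa5_1_0 : Fin.succAbove (1 : Fin 5) (0 : Fin 4) = (0 : Fin 5) := by decide
theorem sa5_1_1 : Fin.succAbove (1 : Fin 5) (1 : Fin 4) = (2 : Fin 5) := by decide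
theorem sa5_1_2 : Fin.succAbove (1 : Fin 5) (2 : Fin 4) = (3 : Fin 5) := by decide
theorem sa5_1_3 : Fin.succAbove (1 : Fin 5) (3 : Fin 4) = (4 : Fin 5) := by decide
theorem sa5_2_0 : Fin.succAbove (2 : Fin 5) (0 : Fin 4) = (0 : Fin 5) := by decide
theorem sa5_2_1 : Fin.succAbove (2 : Fin 5) (1 : Fin 4) = (1 : Fin 5) := by decide
theorem sa5_2_2 : Fin.succAbove (2 : Fin 5) (2 : Fin 4) = (3 : Fin 5) := by decide
theorem sa5_2_3 : Fin.succAbove (2 : Fin 5) (3 : Fin 4) = (4 : Fin 5) := by decide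
theorem sa5_3_0 : Fin.succAbove (3 : Fin 5) (0 : Fin 4) = (0 : Fin 5) := by decide
theorem sa5_3_1 : Fin.succAbove (3 : Fin 5) (1 : Fin 4) = (1 : Fin 5) := by decide
theorem sa5_3_2 : Fin.succAbove (3 : Fin 5) (2 : Fin 4) = (2 : Fin 5) := by decide
theorem sa5_3_3 : Fin.succAbove (3 : Fin 5) (3 : Fin 4) = (4 : Fin 5) := by decide
theorem sa5_4_0 : Fin.succAbove (4 : Fin 5) (0 : Fin 4) = (0 : Fin 5) := by decide
theorem sa5_4_1 : Fin.succAbove (4 : Fin 5) (1 : Fin 4) = (1 : Fin 5) := by decide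
theorem sa5_4_2 : Fin.succAbove (4 : Fin 5) (2 : Fin 4) = (2 : Fin 5) := by decide
theorem sa5_4_3 : Fin.succAbove (4 : Fin 5) (3 : Fin 4) = (3 : Fin 5) := by decide
theorem fs5_0 : Fin.succ (0 : Fin 4) = (1 : Fin 5) := by decide
theorem fc5_0 : Fin.castSucc (0 : Fin 4) = (0 : Fin 5) := by decide
theorem fs5_1 : Fin.succ (1 : Fin 4) = (2 : Fin 5) := by decide
theorem fc5_1 : Fin.castSucc (1 : Fin 4) = (1 : Fin 5) := by decide
theorem fs5_2 : Fin.succ (2 : Fin 4) = (3 : Fin 5) := by decide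
theorem fc5_2 : Fin.castSucc (2 : Fin 4) = (2 : Fin 5) := by decide
theorem fs5_3 : Fin.succ (3 : Fin 4) = (4 : Fin 5) := by decide
theorem fc5_3 : Fin.castSucc (3 : Fin 4) = (3 : Fin 5) := by decide
theorem fv5_0 : ((0 : Fin 5) : ℕ) = 0 := by decide
theorem fv5_1 : ((1 : Fin 5) : ℕ) = 1 := by decide
theorem fv5_2 : ((2 : Fin 5) : ℕ) = 2 := by decide
theorem fv5_3 : ((3 : Fin 5) : ℕ) = 3 := by decide
theorem fv5_4 : ((4 : Fin 5) : ℕ) = 4 := by decide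
theorem sa6_0_0 : Fin.succAbove (0 : Fin 6) (0 : Fin 5) = (1 : Fin 6) := by decide
theorem sa6_0_1 : Fin.succAbove (0 : Fin 6) (1 : Fin 5) = (2 : Fin 6) := by decide
theorem sa6_0_2 : Fin.succAbove (0 : Fin 6) (2 : Fin 5) = (3 : Fin 6) := by decide
theorem sa6_0_3 : Fin.succAbove (0 : Fin 6) (3 : Fin 5) = (4 : Fin 6) := by decide
theorem sa6_0_4 : Fin.succAbove (0 : Fin 6) (4 : Fin 5) = (5 : Fin 6) := by decide
theorem sa6_1_0 : Fin.succAbove (1 : Fin 6) (0 : Fin 5) = (0 : Fin 6) := by decide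
theorem sa6_1_1 : Fin.succAbove (1 : Fin 6) (1 : Fin 5) = (2 : Fin 6) := by decide
theorem sa6_1_2 : Fin.succAbove (1 : Fin 6) (2 : Fin 5) = (3 : Fin 6) := by decide
theorem sa6_1_3 : Fin.succAbove (1 : Fin 6) (3 : Fin 5) = (4 : Fin 6) := by decide
theorem sa6_1_4 : Fin.succAbove (1 : Fin 6) (4 : Fin 5) = (5 : Fin 6) := by decide
theorem sa6_2_0 : Fin.succAbove (2 : Fin 6) (0 : Fin 5) = (0 : Fin 6) := by decide
theorem sa6_2_1 : Fin.succAbove (2 : Fin 6) (1 : Fin 5) = (1 : Fin 6) := by decide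
theorem sa6_2_2 : Fin.succAbove (2 : Fin 6) (2 : Fin 5) = (3 : Fin 6) := by decide
theorem sa6_2_3 : Fin.succAbove (2 : Fin 6) (3 : Fin 5) = (4 : Fin 6) := by decide
theorem sa6_2_4 : Fin.succAbove (2 : Fin 6) (4 : Fin 5) = (5 : Fin 6) := by decide
theorem sa6_3_0 : Fin.succAbove (3 : Fin 6) (0 : Fin 5) = (0 : Fin 6) := by decide
theorem sa6_3_1 : Fin.succAbove (3 : Fin 6) (1 : Fin 5) = (1 : Fin 6) := by decide
theorem sa6_3_2 : Fin.succAbove (3 : Fin 6) (2 : Fin 5) = (2 : Fin 6) := by decide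
theorem sa6_3_3 : Fin.succAbove (3 : Fin 6) (3 : Fin 5) = (4 : Fin 6) := by decide
theorem sa6_3_4 : Fin.succAbove (3 : Fin 6) (4 : Fin 5) = (5 : Fin 6) := by decide
theorem sa6_4_0 : Fin.succAbove (4 : Fin 6) (0 : Fin 5) = (0 : Fin 6) := by decide
theorem sa6_4_1 : Fin.succAbove (4 : Fin 6) (1 : Fin 5) = (1 : Fin 6) := by decide
theorem sa6_4_2 : Fin.succAbove (4 : Fin 6) (2 : Fin 5) = (2 : Fin 6) := by decide
theorem sa6_4_3 : Fin.succAbove (4 : Fin 6) (3 : Fin 5) = (3 : Fin 6) := by decide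
theorem sa6_4_4 : Fin.succAbove (4 : Fin 6) (4 : Fin 5) = (5 : Fin 6) := by decide
theorem sa6_5_0 : Fin.succAbove (5 : Fin 6) (0 : Fin 5) = (0 : Fin 6) := by decide
theorem sa6_5_1 : Fin.succAbove (5 : Fin 6) (1 : Fin 5) = (1 : Fin 6) := by decide
theorem sa6_5_2 : Fin.succAbove (5 : Fin 6) (2 : Fin 5) = (2 : Fin 6) := by decide
theorem sa6_5_3 : Fin.succAbove (5 : Fin 6) (3 : Fin 5) = (3 : Fin 6) := by decide
theorem sa6_5_4 : Fin.succAbove (5 : Fin 6) (4 : Fin 5) = (4 : Fin 6) := by decide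
theorem fs6_0 : Fin.succ (0 : Fin 5) = (1 : Fin 6) := by decide
theorem fc6_0 : Fin.castSucc (0 : Fin 5) = (0 : Fin 6) := by decide
theorem fs6_1 : Fin.succ (1 : Fin 5) = (2 : Fin 6) := by decide
theorem fc6_1 : Fin.castSucc (1 : Fin 5) = (1 : Fin 6) := by decide
theorem fs6_2 : Fin.succ (2 : Fin 5) = (3 : Fin 6) := by decide
theorem fc6_2 : Fin.castSucc (2 : Fin 5) = (2 : Fin 6) := by decide
theorem fs6_3 : Fin.succ (3 : Fin 5) = (4 : Fin 6) := by decide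
theorem fc6_3 : Fin.castSucc (3 : Fin 5) = (3 : Fin 6) := by decide
theorem fs6_4 : Fin.succ (4 : Fin 5) = (5 : Fin 6) := by decide
theorem fc6_4 : Fin.castSucc (4 : Fin 5) = (4 : Fin 6) := by decide
theorem fv6_0 : ((0 : Fin 6) : ℕ) = 0 := by decide
theorem fv6_1 : ((1 : Fin 6) : ℕ) = 1 := by decide
theorem fv6_2 : ((2 : Fin 6) : ℕ) = 2 := by decide
theorem fv6_3 : ((3 : Fin 6) : ℕ) = 3 := by decide
theorem fv6_4 : ((4 : Fin 6) : ℕ) = 4 := by decide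
theorem fv6_5 : ((5 : Fin 6) : ℕ) = 5 := by decide

theorem det4 (M : Matrix (Fin 4) (Fin 4) ℝ) :
    M.det = (((((M 0 0*M 1 1*M 2 2*M 3 3 + (-(M 0 0*M 1 1*M 2 3*M 3 2))) + ((-(M 0 0*M 1 2*M 2 1*M 3 3)) + M 0 0*M 1 2*M 2 3*M 3 1)) + ((M 0 0*M 1 3*M 2 1*M 3 2 + (-(M 0 0*M 1 3*M 2 2*M 3 1))) + ((-(M 0 1*M 1 0*M 2 2*M 3 3)) + M 0 1*M 1 0*M 2 3*M 3 2))) + (((M 0 1*M 1 2*M 2 0*M 3 3 + (-(M 0 1*M 1 2*M 2 3*M 3 0))) + ((-(M 0 1*M 1 3*M 2 0*M 3 2)) + M 0 1*M 1 3*M 2 2*M 3 0)) + ((M 0 2*M 1 0*M 2 1*M 3 3 + (-(M 0 2*M 1 0*M 2 3*M 3 1))) + ((-(M 0 2*M 1 1*M 2 0*M 3 3)) + M 0 2*M 1 1*M 2 3*M 3 0)))) + (((M 0 2*M 1 3*M 2 0*M 3 1 + (-(M 0 2*M 1 3*M 2 1*M 3 0))) + ((-(M 0 3*M 1 0*M 2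 1*M 3 2)) + M 0 3*M 1 0*M 2 2*M 3 1)) + ((M 0 3*M 1 1*M 2 0*M 3 2 + (-(M 0 3*M 1 1*M 2 2*M 3 0))) + ((-(M 0 3*M 1 2*M 2 0*M 3 1)) + M 0 3*M 1 2*M 2 1*M 3 0)))) := by
  rw [Matrix.det_succ_row_zero]
  simp only [Fin.sum_univ_succ, Fin.sum_univ_zero, Matrix.det_fin_three, Matrix.submatrix_apply,
    sa3_0_0, sa3_0_1, sa3_1_0, sa3_1_1, sa3_2_0, sa3_2_1, fs3_0, fc3_0, fs3_1, fc3_1, fv3_0, fv3_1, fv3_2, sa4_0_0, sa4_0_1, sa4_0_2, sa4_1_0, sa4_1_1, sa4_1_2, sa4_2_0, sa4_2_1, sa4_2_2, sa4_3_0, sa4_3_1, sa4_3_2, fs4_0, fc4_0, fs4_1, fc4_1, fs4_2, fc4_2, fv4_0, fv4_1, fv4_2, fv4_3, sa5_0_0, sa5_0_1, sa5_0_2, sa5_0_3, sa5_1_0, sa5_1_1, sa5_1_2, sa5_1_3, sa5_2_0, sa5_2_1, sa5_2_2, sa5_2_3, sa5_3_0, sa5_3_1, sa5_3_2, sa5_3_3,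 sa5_4_0, sa5_4_1, sa5_4_2, sa5_4_3, fs5_0, fc5_0, fs5_1, fc5_1, fs5_2, fc5_2, fs5_3, fc5_3, fv5_0, fv5_1, fv5_2, fv5_3, fv5_4, sa6_0_0, sa6_0_1, sa6_0_2, sa6_0_3, sa6_0_4, sa6_1_0, sa6_1_1, sa6_1_2, sa6_1_3, sa6_1_4, sa6_2_0, sa6_2_1, sa6_2_2, sa6_2_3, sa6_2_4, sa6_3_0, sa6_3_1, sa6_3_2, sa6_3_3, sa6_3_4, sa6_4_0, sa6_4_1, sa6_4_2, sa6_4_3, sa6_4_4, sa6_5_0, sa6_5_1, sa6_5_2, sa6_5_3, sa6_5_4, fs6_0, fc6_0, fs6_1, fc6_1, fs6_2, fc6_2, fs6_3, fc6_3, fs6_4, fc6_4, fv6_0, fv6_1, fv6_2, fv6_3, fv6_4, fv6_5]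
  norm_num [sa3_0_0, sa3_0_1, sa3_1_0, sa3_1_1, sa3_2_0, sa3_2_1, fs3_0, fc3_0, fs3_1, fc3_1, fv3_0, fv3_1, fv3_2, sa4_0_0, sa4_0_1, sa4_0_2, sa4_1_0, sa4_1_1, sa4_1_2, sa4_2_0, sa4_2_1, sa4_2_2, sa4_3_0, sa4_3_1, sa4_3_2, fs4_0, fc4_0, fs4_1, fc4_1, fs4_2, fc4_2, fv4_0, fv4_1, fv4_2, fv4_3, sa5_0_0, sa5_0_1, sa5_0_2, sa5_0_3, sa5_1_0, sa5_1_1, sa5_1_2, sa5_1_3, sa5_2_0, sa5_2_1, sa5_2_2, sa5_2_3, sa5_3_0, sa5_3_1, sa5_3_2, sa5_3_3, sa5_4_0, sa5_4_1, sa5_4_2, sa5_4_3, fs5_0, fc5_0, fs5_1, fc5_1, fs5_2, fc5_2, fs5_3, fc5_3, fv5_0, fv5_1, fv5_2, fv5_3, fv5_4, sa6_0_0, sa6_0_1, sa6_0_2, sa6_0_3, sa6_0_4, sa6_1_0, sa6_1_1, sa6_1_2, sa6_1_3, sa6_1_4, sa6_2_0, sa6_2_1, sa6_2_2, sa6_2_3,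 sa6_2_4, sa6_3_0, sa6_3_1, sa6_3_2, sa6_3_3, sa6_3_4, sa6_4_0, sa6_4_1, sa6_4_2, sa6_4_3, sa6_4_4, sa6_5_0, sa6_5_1, sa6_5_2, sa6_5_3, sa6_5_4, fs6_0, fc6_0, fs6_1, fc6_1, fs6_2, fc6_2, fs6_3, fc6_3, fs6_4, fc6_4, fv6_0, fv6_1, fv6_2, fv6_3, fv6_4, fv6_5]
  ring

theorem det5 (M : Matrix (Fin 5) (Fin 5) ℝ) :
    M.det = (((((((M 0 0*M 1 1*M 2 2*M 3 3*M 4 4 + (-(M 0 0*M 1 1*M 2 2*M 3 4*M 4 3))) + ((-(M 0 0*M 1 1*M 2 3*M 3 2*M 4 4)) + M 0 0*M 1 1*M 2 3*M 3 4*M 4 2)) + ((M 0 0*M 1 1*M 2 4*M 3 2*M 4 3 + (-(M 0 0*M 1 1*M 2 4*M 3 3*M 4 2))) + ((-(M 0 0*M 1 2*M 2 1*M 3 3*M 4 4)) + M 0 0*M 1 2*M 2 1*M 3 4*M 4 3))) + (((M 0 0*M 1 2*M 2 3*M 3 1*M 4 4 + (-(M 0 0*M 1 2*M 2 3*M 3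 4*M 4 1))) + ((-(M 0 0*M 1 2*M 2 4*M 3 1*M 4 3)) + M 0 0*M 1 2*M 2 4*M 3 3*M 4 1)) + ((M 0 0*M 1 3*M 2 1*M 3 2*M 4 4 + (-(M 0 0*M 1 3*M 2 1*M 3 4*M 4 2))) + ((-(M 0 0*M 1 3*M 2 2*M 3 1*M 4 4)) + M 0 0*M 1 3*M 2 2*M 3 4*M 4 1)))) + ((((M 0 0*M 1 3*M 2 4*M 3 1*M 4 2 + (-(M 0 0*M 1 3*M 2 4*M 3 2*M 4 1))) + ((-(M 0 0*M 1 4*M 2 1*M 3 2*M 4 3)) + M 0 0*M 1 4*M 2 1*M 3 3*M 4 2)) + ((M 0 0*M 1 4*M 2 2*M 3 1*M 4 3 + (-(M 0 0*M 1 4*M 2 2*M 3 3*M 4 1))) + ((-(M 0 0*M 1 4*M 2 3*M 3 1*M 4 2)) + M 0 0*M 1 4*M 2 3*M 3 2*M 4 1))) + ((((-(M 0 1*M 1 0*M 2 2*M 3 3*M 4 4)) + M 0 1*M 1 0*M 2 2*M 3 4*M 4 3) + (M 0 1*M 1 0*M 2 3*M 3 2*M 4 4 + (-(M 0 1*M 1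 0*M 2 3*M 3 4*M 4 2)))) + (((-(M 0 1*M 1 0*M 2 4*M 3 2*M 4 3)) + M 0 1*M 1 0*M 2 4*M 3 3*M 4 2) + (M 0 1*M 1 2*M 2 0*M 3 3*M 4 4 + (-(M 0 1*M 1 2*M 2 0*M 3 4*M 4 3))))))) + ((((((-(M 0 1*M 1 2*M 2 3*M 3 0*M 4 4)) + M 0 1*M 1 2*M 2 3*M 3 4*M 4 0) + (M 0 1*M 1 2*M 2 4*M 3 0*M 4 3 + (-(M 0 1*M 1 2*M 2 4*M 3 3*M 4 0)))) + (((-(M 0 1*M 1 3*M 2 0*M 3 2*M 4 4)) + M 0 1*M 1 3*M 2 0*M 3 4*M 4 2) + (M 0 1*M 1 3*M 2 2*M 3 0*M 4 4 + (-(M 0 1*M 1 3*M 2 2*M 3 4*M 4 0))))) + ((((-(M 0 1*M 1 3*M 2 4*M 3 0*M 4 2)) + M 0 1*M 1 3*M 2 4*M 3 2*M 4 0) + (M 0 1*M 1 4*M 2 0*M 3 2*M 4 3 + (-(M 0 1*M 1 4*M 2 0*M 3 3*M 4 2)))) + (((-(M 0 1*M 1 4*M 2 2*M 3 0*M 4 3))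 + M 0 1*M 1 4*M 2 2*M 3 3*M 4 0) + (M 0 1*M 1 4*M 2 3*M 3 0*M 4 2 + (-(M 0 1*M 1 4*M 2 3*M 3 2*M 4 0)))))) + ((((M 0 2*M 1 0*M 2 1*M 3 3*M 4 4 + (-(M 0 2*M 1 0*M 2 1*M 3 4*M 4 3))) + ((-(M 0 2*M 1 0*M 2 3*M 3 1*M 4 4)) + M 0 2*M 1 0*M 2 3*M 3 4*M 4 1)) + ((M 0 2*M 1 0*M 2 4*M 3 1*M 4 3 + (-(M 0 2*M 1 0*M 2 4*M 3 3*M 4 1))) + ((-(M 0 2*M 1 1*M 2 0*M 3 3*M 4 4)) + M 0 2*M 1 1*M 2 0*M 3 4*M 4 3))) + (((M 0 2*M 1 1*M 2 3*M 3 0*M 4 4 + (-(M 0 2*M 1 1*M 2 3*M 3 4*M 4 0))) + ((-(M 0 2*M 1 1*M 2 4*M 3 0*M 4 3)) + M 0 2*M 1 1*M 2 4*M 3 3*M 4 0)) + ((M 0 2*M 1 3*M 2 0*M 3 1*M 4 4 + (-(M 0 2*M 1 3*M 2 0*M 3 4*M 4 1))) + ((-(M 0 2*M 1 3*M 2 1*M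 3 0*M 4 4)) + M 0 2*M 1 3*M 2 1*M 3 4*M 4 0)))))) + ((((((M 0 2*M 1 3*M 2 4*M 3 0*M 4 1 + (-(M 0 2*M 1 3*M 2 4*M 3 1*M 4 0))) + ((-(M 0 2*M 1 4*M 2 0*M 3 1*M 4 3)) + M 0 2*M 1 4*M 2 0*M 3 3*M 4 1)) + ((M 0 2*M 1 4*M 2 1*M 3 0*M 4 3 + (-(M 0 2*M 1 4*M 2 1*M 3 3*M 4 0))) + ((-(M 0 2*M 1 4*M 2 3*M 3 0*M 4 1)) + M 0 2*M 1 4*M 2 3*M 3 1*M 4 0))) + ((((-(M 0 3*M 1 0*M 2 1*M 3 2*M 4 4)) + M 0 3*M 1 0*M 2 1*M 3 4*M 4 2) + (M 0 3*M 1 0*M 2 2*M 3 1*M 4 4 + (-(M 0 3*M 1 0*M 2 2*M 3 4*M 4 1)))) + (((-(M 0 3*M 1 0*M 2 4*M 3 1*M 4 2)) + M 0 3*M 1 0*M 2 4*M 3 2*M 4 1) + (M 0 3*M 1 1*M 2 0*M 3 2*M 4 4 + (-(M 0 3*M 1 1*M 2 0*M 3 4*M 4 2)))))) + (((((-(M 0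 3*M 1 1*M 2 2*M 3 0*M 4 4)) + M 0 3*M 1 1*M 2 2*M 3 4*M 4 0) + (M 0 3*M 1 1*M 2 4*M 3 0*M 4 2 + (-(M 0 3*M 1 1*M 2 4*M 3 2*M 4 0)))) + (((-(M 0 3*M 1 2*M 2 0*M 3 1*M 4 4)) + M 0 3*M 1 2*M 2 0*M 3 4*M 4 1) + (M 0 3*M 1 2*M 2 1*M 3 0*M 4 4 + (-(M 0 3*M 1 2*M 2 1*M 3 4*M 4 0))))) + ((((-(M 0 3*M 1 2*M 2 4*M 3 0*M 4 1)) + M 0 3*M 1 2*M 2 4*M 3 1*M 4 0) + (M 0 3*M 1 4*M 2 0*M 3 1*M 4 2 + (-(M 0 3*M 1 4*M 2 0*M 3 2*M 4 1)))) + (((-(M 0 3*M 1 4*M 2 1*M 3 0*M 4 2)) + M 0 3*M 1 4*M 2 1*M 3 2*M 4 0) + (M 0 3*M 1 4*M 2 2*M 3 0*M 4 1 + (-(M 0 3*M 1 4*M 2 2*M 3 1*M 4 0))))))) + (((((M 0 4*M 1 0*M 2 1*M 3 2*M 4 3 + (-(M 0 4*M 1 0*M 2 1*M 3 3*M 4 2)))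 + ((-(M 0 4*M 1 0*M 2 2*M 3 1*M 4 3)) + M 0 4*M 1 0*M 2 2*M 3 3*M 4 1)) + ((M 0 4*M 1 0*M 2 3*M 3 1*M 4 2 + (-(M 0 4*M 1 0*M 2 3*M 3 2*M 4 1))) + ((-(M 0 4*M 1 1*M 2 0*M 3 2*M 4 3)) + M 0 4*M 1 1*M 2 0*M 3 3*M 4 2))) + (((M 0 4*M 1 1*M 2 2*M 3 0*M 4 3 + (-(M 0 4*M 1 1*M 2 2*M 3 3*M 4 0))) + ((-(M 0 4*M 1 1*M 2 3*M 3 0*M 4 2)) + M 0 4*M 1 1*M 2 3*M 3 2*M 4 0)) + ((M 0 4*M 1 2*M 2 0*M 3 1*M 4 3 + (-(M 0 4*M 1 2*M 2 0*M 3 3*M 4 1))) + ((-(M 0 4*M 1 2*M 2 1*M 3 0*M 4 3)) + M 0 4*M 1 2*M 2 1*M 3 3*M 4 0)))) + (((M 0 4*M 1 2*M 2 3*M 3 0*M 4 1 + (-(M 0 4*M 1 2*M 2 3*M 3 1*M 4 0))) + ((-(M 0 4*M 1 3*M 2 0*M 3 1*M 4 2)) + M 0 4*M 1 3*M 2 0*M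 3 2*M 4 1)) + ((M 0 4*M 1 3*M 2 1*M 3 0*M 4 2 + (-(M 0 4*M 1 3*M 2 1*M 3 2*M 4 0))) + ((-(M 0 4*M 1 3*M 2 2*M 3 0*M 4 1)) + M 0 4*M 1 3*M 2 2*M 3 1*M 4 0)))))) := by
  rw [Matrix.det_succ_row_zero]
  simp only [Fin.sum_univ_succ, Fin.sum_univ_zero, det4, Matrix.submatrix_apply,
    sa3_0_0, sa3_0_1, sa3_1_0, sa3_1_1, sa3_2_0, sa3_2_1, fs3_0, fc3_0, fs3_1, fc3_1, fv3_0, fv3_1, fv3_2, sa4_0_0, sa4_0_1, sa4_0_2, sa4_1_0, sa4_1_1, sa4_1_2, sa4_2_0, sa4_2_1, sa4_2_2, sa4_3_0, sa4_3_1, sa4_3_2, fs4_0, fc4_0, fs4_1, fc4_1, fs4_2, fc4_2, fv4_0, fv4_1, fv4_2, fv4_3, sa5_0_0, sa5_0_1, sa5_0_2, sa5_0_3, sa5_1_0, sa5_1_1, sa5_1_2, sa5_1_3, sa5_2_0, sa5_2_1, sa5_2_2, sa5_2_3, sa5_3_0, sa5_3_1, sa5_3_2, sa5_3_3, sa5_4_0,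 sa5_4_1, sa5_4_2, sa5_4_3, fs5_0, fc5_0, fs5_1, fc5_1, fs5_2, fc5_2, fs5_3, fc5_3, fv5_0, fv5_1, fv5_2, fv5_3, fv5_4, sa6_0_0, sa6_0_1, sa6_0_2, sa6_0_3, sa6_0_4, sa6_1_0, sa6_1_1, sa6_1_2, sa6_1_3, sa6_1_4, sa6_2_0, sa6_2_1, sa6_2_2, sa6_2_3, sa6_2_4, sa6_3_0, sa6_3_1, sa6_3_2, sa6_3_3, sa6_3_4, sa6_4_0, sa6_4_1, sa6_4_2, sa6_4_3, sa6_4_4, sa6_5_0, sa6_5_1, sa6_5_2, sa6_5_3, sa6_5_4, fs6_0, fc6_0, fs6_1, fc6_1, fs6_2, fc6_2, fs6_3, fc6_3, fs6_4, fc6_4, fv6_0, fv6_1, fv6_2, fv6_3, fv6_4, fv6_5]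
  norm_num [sa3_0_0, sa3_0_1, sa3_1_0, sa3_1_1, sa3_2_0, sa3_2_1, fs3_0, fc3_0, fs3_1, fc3_1, fv3_0, fv3_1, fv3_2, sa4_0_0, sa4_0_1, sa4_0_2, sa4_1_0, sa4_1_1, sa4_1_2, sa4_2_0, sa4_2_1, sa4_2_2, sa4_3_0, sa4_3_1, sa4_3_2, fs4_0, fc4_0, fs4_1, fc4_1, fs4_2, fc4_2, fv4_0, fv4_1, fv4_2, fv4_3, sa5_0_0, sa5_0_1, sa5_0_2, sa5_0_3, sa5_1_0, sa5_1_1, sa5_1_2, sa5_1_3, sa5_2_0, sa5_2_1, sa5_2_2, sa5_2_3, sa5_3_0, sa5_3_1, sa5_3_2, sa5_3_3, sa5_4_0, sa5_4_1, sa5_4_2, sa5_4_3, fs5_0, fc5_0, fs5_1, fc5_1, fs5_2, fc5_2, fs5_3, fc5_3, fv5_0, fv5_1, fv5_2, fv5_3, fv5_4, sa6_0_0, sa6_0_1, sa6_0_2, sa6_0_3, sa6_0_4, sa6_1_0, sa6_1_1, sa6_1_2, sa6_1_3, sa6_1_4, sa6_2_0, sa6_2_1, sa6_2_2, sa6_2_3,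 sa6_2_4, sa6_3_0, sa6_3_1, sa6_3_2, sa6_3_3, sa6_3_4, sa6_4_0, sa6_4_1, sa6_4_2, sa6_4_3, sa6_4_4, sa6_5_0, sa6_5_1, sa6_5_2, sa6_5_3, sa6_5_4, fs6_0, fc6_0, fs6_1, fc6_1, fs6_2, fc6_2, fs6_3, fc6_3, fs6_4, fc6_4, fv6_0, fv6_1, fv6_2, fv6_3, fv6_4, fv6_5]
  ring

theorem det6 (M : Matrix (Fin 6) (Fin 6) ℝ) :
    M.det = ((((((((((M 0 0*M 1 1*M 2 2*M 3 3*M 4 4*M 5 5 + (-(M 0 0*M 1 1*M 2 2*M 3 3*M 4 5*M 5 4))) + ((-(M 0 0*M 1 1*M 2 2*M 3 4*M 4 3*M 5 5)) + M 0 0*M 1 1*M 2 2*M 3 4*M 4 5*M 5 3)) + ((M 0 0*M 1 1*M 2 2*M 3 5*M 4 3*M 5 4 + (-(M 0 0*M 1 1*M 2 2*M 3 5*M 4 4*M 5 3))) + ((-(M 0 0*M 1 1*M 2 3*M 3 2*M 4 4*M 5 5)) + M 0 0*M 1 1*M 2 3*M 3 2*M 4 5*M 5 4))) + (((M 0 0*M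 1 1*M 2 3*M 3 4*M 4 2*M 5 5 + (-(M 0 0*M 1 1*M 2 3*M 3 4*M 4 5*M 5 2))) + ((-(M 0 0*M 1 1*M 2 3*M 3 5*M 4 2*M 5 4)) + M 0 0*M 1 1*M 2 3*M 3 5*M 4 4*M 5 2)) + ((M 0 0*M 1 1*M 2 4*M 3 2*M 4 3*M 5 5 + (-(M 0 0*M 1 1*M 2 4*M 3 2*M 4 5*M 5 3))) + ((-(M 0 0*M 1 1*M 2 4*M 3 3*M 4 2*M 5 5)) + M 0 0*M 1 1*M 2 4*M 3 3*M 4 5*M 5 2)))) + ((((M 0 0*M 1 1*M 2 4*M 3 5*M 4 2*M 5 3 + (-(M 0 0*M 1 1*M 2 4*M 3 5*M 4 3*M 5 2))) + ((-(M 0 0*M 1 1*M 2 5*M 3 2*M 4 3*M 5 4)) + M 0 0*M 1 1*M 2 5*M 3 2*M 4 4*M 5 3)) + ((M 0 0*M 1 1*M 2 5*M 3 3*M 4 2*M 5 4 + (-(M 0 0*M 1 1*M 2 5*M 3 3*M 4 4*M 5 2))) + ((-(M 0 0*M 1 1*M 2 5*M 3 4*M 4 2*M 5 3)) + M 0 0*M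 1 1*M 2 5*M 3 4*M 4 3*M 5 2))) + ((((-(M 0 0*M 1 2*M 2 1*M 3 3*M 4 4*M 5 5)) + M 0 0*M 1 2*M 2 1*M 3 3*M 4 5*M 5 4) + (M 0 0*M 1 2*M 2 1*M 3 4*M 4 3*M 5 5 + (-(M 0 0*M 1 2*M 2 1*M 3 4*M 4 5*M 5 3)))) + (((-(M 0 0*M 1 2*M 2 1*M 3 5*M 4 3*M 5 4)) + M 0 0*M 1 2*M 2 1*M 3 5*M 4 4*M 5 3) + (M 0 0*M 1 2*M 2 3*M 3 1*M 4 4*M 5 5 + (-(M 0 0*M 1 2*M 2 3*M 3 1*M 4 5*M 5 4))))))) + ((((((-(M 0 0*M 1 2*M 2 3*M 3 4*M 4 1*M 5 5)) + M 0 0*M 1 2*M 2 3*M 3 4*M 4 5*M 5 1) + (M 0 0*M 1 2*M 2 3*M 3 5*M 4 1*M 5 4 + (-(M 0 0*M 1 2*M 2 3*M 3 5*M 4 4*M 5 1)))) + (((-(M 0 0*M 1 2*M 2 4*M 3 1*M 4 3*M 5 5)) + M 0 0*M 1 2*M 2 4*M 3 1*M 4 5*M 5 3) + (M 0 0*M 1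 2*M 2 4*M 3 3*M 4 1*M 5 5 + (-(M 0 0*M 1 2*M 2 4*M 3 3*M 4 5*M 5 1))))) + ((((-(M 0 0*M 1 2*M 2 4*M 3 5*M 4 1*M 5 3)) + M 0 0*M 1 2*M 2 4*M 3 5*M 4 3*M 5 1) + (M 0 0*M 1 2*M 2 5*M 3 1*M 4 3*M 5 4 + (-(M 0 0*M 1 2*M 2 5*M 3 1*M 4 4*M 5 3)))) + (((-(M 0 0*M 1 2*M 2 5*M 3 3*M 4 1*M 5 4)) + M 0 0*M 1 2*M 2 5*M 3 3*M 4 4*M 5 1) + (M 0 0*M 1 2*M 2 5*M 3 4*M 4 1*M 5 3 + (-(M 0 0*M 1 2*M 2 5*M 3 4*M 4 3*M 5 1)))))) + ((((M 0 0*M 1 3*M 2 1*M 3 2*M 4 4*M 5 5 + (-(M 0 0*M 1 3*M 2 1*M 3 2*M 4 5*M 5 4))) + ((-(M 0 0*M 1 3*M 2 1*M 3 4*M 4 2*M 5 5)) + M 0 0*M 1 3*M 2 1*M 3 4*M 4 5*M 5 2)) + ((M 0 0*M 1 3*M 2 1*M 3 5*M 4 2*M 5 4 + (-(M 0 0*M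 1 3*M 2 1*M 3 5*M 4 4*M 5 2))) + ((-(M 0 0*M 1 3*M 2 2*M 3 1*M 4 4*M 5 5)) + M 0 0*M 1 3*M 2 2*M 3 1*M 4 5*M 5 4))) + (((M 0 0*M 1 3*M 2 2*M 3 4*M 4 1*M 5 5 + (-(M 0 0*M 1 3*M 2 2*M 3 4*M 4 5*M 5 1))) + ((-(M 0 0*M 1 3*M 2 2*M 3 5*M 4 1*M 5 4)) + M 0 0*M 1 3*M 2 2*M 3 5*M 4 4*M 5 1)) + ((M 0 0*M 1 3*M 2 4*M 3 1*M 4 2*M 5 5 + (-(M 0 0*M 1 3*M 2 4*M 3 1*M 4 5*M 5 2))) + ((-(M 0 0*M 1 3*M 2 4*M 3 2*M 4 1*M 5 5)) + M 0 0*M 1 3*M 2 4*M 3 2*M 4 5*M 5 1)))))) + ((((((M 0 0*M 1 3*M 2 4*M 3 5*M 4 1*M 5 2 + (-(M 0 0*M 1 3*M 2 4*M 3 5*M 4 2*M 5 1))) + ((-(M 0 0*M 1 3*M 2 5*M 3 1*M 4 2*M 5 4)) + M 0 0*M 1 3*M 2 5*M 3 1*M 4 4*M 5 2)) + ((M 0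 0*M 1 3*M 2 5*M 3 2*M 4 1*M 5 4 + (-(M 0 0*M 1 3*M 2 5*M 3 2*M 4 4*M 5 1))) + ((-(M 0 0*M 1 3*M 2 5*M 3 4*M 4 1*M 5 2)) + M 0 0*M 1 3*M 2 5*M 3 4*M 4 2*M 5 1))) + ((((-(M 0 0*M 1 4*M 2 1*M 3 2*M 4 3*M 5 5)) + M 0 0*M 1 4*M 2 1*M 3 2*M 4 5*M 5 3) + (M 0 0*M 1 4*M 2 1*M 3 3*M 4 2*M 5 5 + (-(M 0 0*M 1 4*M 2 1*M 3 3*M 4 5*M 5 2)))) + (((-(M 0 0*M 1 4*M 2 1*M 3 5*M 4 2*M 5 3)) + M 0 0*M 1 4*M 2 1*M 3 5*M 4 3*M 5 2) + (M 0 0*M 1 4*M 2 2*M 3 1*M 4 3*M 5 5 + (-(M 0 0*M 1 4*M 2 2*M 3 1*M 4 5*M 5 3)))))) + (((((-(M 0 0*M 1 4*M 2 2*M 3 3*M 4 1*M 5 5)) + M 0 0*M 1 4*M 2 2*M 3 3*M 4 5*M 5 1) + (M 0 0*M 1 4*M 2 2*M 3 5*M 4 1*M 5 3 + (-(M 0 0*M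 1 4*M 2 2*M 3 5*M 4 3*M 5 1)))) + (((-(M 0 0*M 1 4*M 2 3*M 3 1*M 4 2*M 5 5)) + M 0 0*M 1 4*M 2 3*M 3 1*M 4 5*M 5 2) + (M 0 0*M 1 4*M 2 3*M 3 2*M 4 1*M 5 5 + (-(M 0 0*M 1 4*M 2 3*M 3 2*M 4 5*M 5 1))))) + ((((-(M 0 0*M 1 4*M 2 3*M 3 5*M 4 1*M 5 2)) + M 0 0*M 1 4*M 2 3*M 3 5*M 4 2*M 5 1) + (M 0 0*M 1 4*M 2 5*M 3 1*M 4 2*M 5 3 + (-(M 0 0*M 1 4*M 2 5*M 3 1*M 4 3*M 5 2)))) + (((-(M 0 0*M 1 4*M 2 5*M 3 2*M 4 1*M 5 3)) + M 0 0*M 1 4*M 2 5*M 3 2*M 4 3*M 5 1) + (M 0 0*M 1 4*M 2 5*M 3 3*M 4 1*M 5 2 + (-(M 0 0*M 1 4*M 2 5*M 3 3*M 4 2*M 5 1))))))) + (((((M 0 0*M 1 5*M 2 1*M 3 2*M 4 3*M 5 4 + (-(M 0 0*M 1 5*M 2 1*M 3 2*M 4 4*M 5 3))) + ((-(M 0 0*M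 1 5*M 2 1*M 3 3*M 4 2*M 5 4)) + M 0 0*M 1 5*M 2 1*M 3 3*M 4 4*M 5 2)) + ((M 0 0*M 1 5*M 2 1*M 3 4*M 4 2*M 5 3 + (-(M 0 0*M 1 5*M 2 1*M 3 4*M 4 3*M 5 2))) + ((-(M 0 0*M 1 5*M 2 2*M 3 1*M 4 3*M 5 4)) + M 0 0*M 1 5*M 2 2*M 3 1*M 4 4*M 5 3))) + (((M 0 0*M 1 5*M 2 2*M 3 3*M 4 1*M 5 4 + (-(M 0 0*M 1 5*M 2 2*M 3 3*M 4 4*M 5 1))) + ((-(M 0 0*M 1 5*M 2 2*M 3 4*M 4 1*M 5 3)) + M 0 0*M 1 5*M 2 2*M 3 4*M 4 3*M 5 1)) + ((M 0 0*M 1 5*M 2 3*M 3 1*M 4 2*M 5 4 + (-(M 0 0*M 1 5*M 2 3*M 3 1*M 4 4*M 5 2))) + ((-(M 0 0*M 1 5*M 2 3*M 3 2*M 4 1*M 5 4)) + M 0 0*M 1 5*M 2 3*M 3 2*M 4 4*M 5 1)))) + ((((M 0 0*M 1 5*M 2 3*M 3 4*M 4 1*M 5 2 + (-(M 0 0*M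 1 5*M 2 3*M 3 4*M 4 2*M 5 1))) + ((-(M 0 0*M 1 5*M 2 4*M 3 1*M 4 2*M 5 3)) + M 0 0*M 1 5*M 2 4*M 3 1*M 4 3*M 5 2)) + ((M 0 0*M 1 5*M 2 4*M 3 2*M 4 1*M 5 3 + (-(M 0 0*M 1 5*M 2 4*M 3 2*M 4 3*M 5 1))) + ((-(M 0 0*M 1 5*M 2 4*M 3 3*M 4 1*M 5 2)) + M 0 0*M 1 5*M 2 4*M 3 3*M 4 2*M 5 1))) + ((((-(M 0 1*M 1 0*M 2 2*M 3 3*M 4 4*M 5 5)) + M 0 1*M 1 0*M 2 2*M 3 3*M 4 5*M 5 4) + (M 0 1*M 1 0*M 2 2*M 3 4*M 4 3*M 5 5 + (-(M 0 1*M 1 0*M 2 2*M 3 4*M 4 5*M 5 3)))) + (((-(M 0 1*M 1 0*M 2 2*M 3 5*M 4 3*M 5 4)) + M 0 1*M 1 0*M 2 2*M 3 5*M 4 4*M 5 3) + (M 0 1*M 1 0*M 2 3*M 3 2*M 4 4*M 5 5 + (-(M 0 1*M 1 0*M 2 3*M 3 2*M 4 5*M 5 4))))))))) + ((((((((-(M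 0 1*M 1 0*M 2 3*M 3 4*M 4 2*M 5 5)) + M 0 1*M 1 0*M 2 3*M 3 4*M 4 5*M 5 2) + (M 0 1*M 1 0*M 2 3*M 3 5*M 4 2*M 5 4 + (-(M 0 1*M 1 0*M 2 3*M 3 5*M 4 4*M 5 2)))) + (((-(M 0 1*M 1 0*M 2 4*M 3 2*M 4 3*M 5 5)) + M 0 1*M 1 0*M 2 4*M 3 2*M 4 5*M 5 3) + (M 0 1*M 1 0*M 2 4*M 3 3*M 4 2*M 5 5 + (-(M 0 1*M 1 0*M 2 4*M 3 3*M 4 5*M 5 2))))) + ((((-(M 0 1*M 1 0*M 2 4*M 3 5*M 4 2*M 5 3)) + M 0 1*M 1 0*M 2 4*M 3 5*M 4 3*M 5 2) + (M 0 1*M 1 0*M 2 5*M 3 2*M 4 3*M 5 4 + (-(M 0 1*M 1 0*M 2 5*M 3 2*M 4 4*M 5 3)))) + (((-(M 0 1*M 1 0*M 2 5*M 3 3*M 4 2*M 5 4)) + M 0 1*M 1 0*M 2 5*M 3 3*M 4 4*M 5 2) + (M 0 1*M 1 0*M 2 5*M 3 4*M 4 2*M 5 3 + (-(M 0 1*M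 1 0*M 2 5*M 3 4*M 4 3*M 5 2)))))) + ((((M 0 1*M 1 2*M 2 0*M 3 3*M 4 4*M 5 5 + (-(M 0 1*M 1 2*M 2 0*M 3 3*M 4 5*M 5 4))) + ((-(M 0 1*M 1 2*M 2 0*M 3 4*M 4 3*M 5 5)) + M 0 1*M 1 2*M 2 0*M 3 4*M 4 5*M 5 3)) + ((M 0 1*M 1 2*M 2 0*M 3 5*M 4 3*M 5 4 + (-(M 0 1*M 1 2*M 2 0*M 3 5*M 4 4*M 5 3))) + ((-(M 0 1*M 1 2*M 2 3*M 3 0*M 4 4*M 5 5)) + M 0 1*M 1 2*M 2 3*M 3 0*M 4 5*M 5 4))) + (((M 0 1*M 1 2*M 2 3*M 3 4*M 4 0*M 5 5 + (-(M 0 1*M 1 2*M 2 3*M 3 4*M 4 5*M 5 0))) + ((-(M 0 1*M 1 2*M 2 3*M 3 5*M 4 0*M 5 4)) + M 0 1*M 1 2*M 2 3*M 3 5*M 4 4*M 5 0)) + ((M 0 1*M 1 2*M 2 4*M 3 0*M 4 3*M 5 5 + (-(M 0 1*M 1 2*M 2 4*M 3 0*M 4 5*M 5 3))) + ((-(M 0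 1*M 1 2*M 2 4*M 3 3*M 4 0*M 5 5)) + M 0 1*M 1 2*M 2 4*M 3 3*M 4 5*M 5 0))))) + (((((M 0 1*M 1 2*M 2 4*M 3 5*M 4 0*M 5 3 + (-(M 0 1*M 1 2*M 2 4*M 3 5*M 4 3*M 5 0))) + ((-(M 0 1*M 1 2*M 2 5*M 3 0*M 4 3*M 5 4)) + M 0 1*M 1 2*M 2 5*M 3 0*M 4 4*M 5 3)) + ((M 0 1*M 1 2*M 2 5*M 3 3*M 4 0*M 5 4 + (-(M 0 1*M 1 2*M 2 5*M 3 3*M 4 4*M 5 0))) + ((-(M 0 1*M 1 2*M 2 5*M 3 4*M 4 0*M 5 3)) + M 0 1*M 1 2*M 2 5*M 3 4*M 4 3*M 5 0))) + ((((-(M 0 1*M 1 3*M 2 0*M 3 2*M 4 4*M 5 5)) + M 0 1*M 1 3*M 2 0*M 3 2*M 4 5*M 5 4) + (M 0 1*M 1 3*M 2 0*M 3 4*M 4 2*M 5 5 + (-(M 0 1*M 1 3*M 2 0*M 3 4*M 4 5*M 5 2)))) + (((-(M 0 1*M 1 3*M 2 0*M 3 5*M 4 2*M 5 4)) + M 0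 1*M 1 3*M 2 0*M 3 5*M 4 4*M 5 2) + (M 0 1*M 1 3*M 2 2*M 3 0*M 4 4*M 5 5 + (-(M 0 1*M 1 3*M 2 2*M 3 0*M 4 5*M 5 4)))))) + (((((-(M 0 1*M 1 3*M 2 2*M 3 4*M 4 0*M 5 5)) + M 0 1*M 1 3*M 2 2*M 3 4*M 4 5*M 5 0) + (M 0 1*M 1 3*M 2 2*M 3 5*M 4 0*M 5 4 + (-(M 0 1*M 1 3*M 2 2*M 3 5*M 4 4*M 5 0)))) + (((-(M 0 1*M 1 3*M 2 4*M 3 0*M 4 2*M 5 5)) + M 0 1*M 1 3*M 2 4*M 3 0*M 4 5*M 5 2) + (M 0 1*M 1 3*M 2 4*M 3 2*M 4 0*M 5 5 + (-(M 0 1*M 1 3*M 2 4*M 3 2*M 4 5*M 5 0))))) + ((((-(M 0 1*M 1 3*M 2 4*M 3 5*M 4 0*M 5 2)) + M 0 1*M 1 3*M 2 4*M 3 5*M 4 2*M 5 0) + (M 0 1*M 1 3*M 2 5*M 3 0*M 4 2*M 5 4 + (-(M 0 1*M 1 3*M 2 5*M 3 0*M 4 4*M 5 2)))) + (((-(M 0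 1*M 1 3*M 2 5*M 3 2*M 4 0*M 5 4)) + M 0 1*M 1 3*M 2 5*M 3 2*M 4 4*M 5 0) + (M 0 1*M 1 3*M 2 5*M 3 4*M 4 0*M 5 2 + (-(M 0 1*M 1 3*M 2 5*M 3 4*M 4 2*M 5 0)))))))) + ((((((M 0 1*M 1 4*M 2 0*M 3 2*M 4 3*M 5 5 + (-(M 0 1*M 1 4*M 2 0*M 3 2*M 4 5*M 5 3))) + ((-(M 0 1*M 1 4*M 2 0*M 3 3*M 4 2*M 5 5)) + M 0 1*M 1 4*M 2 0*M 3 3*M 4 5*M 5 2)) + ((M 0 1*M 1 4*M 2 0*M 3 5*M 4 2*M 5 3 + (-(M 0 1*M 1 4*M 2 0*M 3 5*M 4 3*M 5 2))) + ((-(M 0 1*M 1 4*M 2 2*M 3 0*M 4 3*M 5 5)) + M 0 1*M 1 4*M 2 2*M 3 0*M 4 5*M 5 3))) + (((M 0 1*M 1 4*M 2 2*M 3 3*M 4 0*M 5 5 + (-(M 0 1*M 1 4*M 2 2*M 3 3*M 4 5*M 5 0))) + ((-(M 0 1*M 1 4*M 2 2*M 3 5*M 4 0*M 5 3)) + M 0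 1*M 1 4*M 2 2*M 3 5*M 4 3*M 5 0)) + ((M 0 1*M 1 4*M 2 3*M 3 0*M 4 2*M 5 5 + (-(M 0 1*M 1 4*M 2 3*M 3 0*M 4 5*M 5 2))) + ((-(M 0 1*M 1 4*M 2 3*M 3 2*M 4 0*M 5 5)) + M 0 1*M 1 4*M 2 3*M 3 2*M 4 5*M 5 0)))) + ((((M 0 1*M 1 4*M 2 3*M 3 5*M 4 0*M 5 2 + (-(M 0 1*M 1 4*M 2 3*M 3 5*M 4 2*M 5 0))) + ((-(M 0 1*M 1 4*M 2 5*M 3 0*M 4 2*M 5 3)) + M 0 1*M 1 4*M 2 5*M 3 0*M 4 3*M 5 2)) + ((M 0 1*M 1 4*M 2 5*M 3 2*M 4 0*M 5 3 + (-(M 0 1*M 1 4*M 2 5*M 3 2*M 4 3*M 5 0))) + ((-(M 0 1*M 1 4*M 2 5*M 3 3*M 4 0*M 5 2)) + M 0 1*M 1 4*M 2 5*M 3 3*M 4 2*M 5 0))) + ((((-(M 0 1*M 1 5*M 2 0*M 3 2*M 4 3*M 5 4)) + M 0 1*M 1 5*M 2 0*M 3 2*M 4 4*M 5 3) + (M 0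 1*M 1 5*M 2 0*M 3 3*M 4 2*M 5 4 + (-(M 0 1*M 1 5*M 2 0*M 3 3*M 4 4*M 5 2)))) + (((-(M 0 1*M 1 5*M 2 0*M 3 4*M 4 2*M 5 3)) + M 0 1*M 1 5*M 2 0*M 3 4*M 4 3*M 5 2) + (M 0 1*M 1 5*M 2 2*M 3 0*M 4 3*M 5 4 + (-(M 0 1*M 1 5*M 2 2*M 3 0*M 4 4*M 5 3))))))) + ((((((-(M 0 1*M 1 5*M 2 2*M 3 3*M 4 0*M 5 4)) + M 0 1*M 1 5*M 2 2*M 3 3*M 4 4*M 5 0) + (M 0 1*M 1 5*M 2 2*M 3 4*M 4 0*M 5 3 + (-(M 0 1*M 1 5*M 2 2*M 3 4*M 4 3*M 5 0)))) + (((-(M 0 1*M 1 5*M 2 3*M 3 0*M 4 2*M 5 4)) + M 0 1*M 1 5*M 2 3*M 3 0*M 4 4*M 5 2) + (M 0 1*M 1 5*M 2 3*M 3 2*M 4 0*M 5 4 + (-(M 0 1*M 1 5*M 2 3*M 3 2*M 4 4*M 5 0))))) + ((((-(M 0 1*M 1 5*M 2 3*M 3 4*M 4 0*M 5 2)) + M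 0 1*M 1 5*M 2 3*M 3 4*M 4 2*M 5 0) + (M 0 1*M 1 5*M 2 4*M 3 0*M 4 2*M 5 3 + (-(M 0 1*M 1 5*M 2 4*M 3 0*M 4 3*M 5 2)))) + (((-(M 0 1*M 1 5*M 2 4*M 3 2*M 4 0*M 5 3)) + M 0 1*M 1 5*M 2 4*M 3 2*M 4 3*M 5 0) + (M 0 1*M 1 5*M 2 4*M 3 3*M 4 0*M 5 2 + (-(M 0 1*M 1 5*M 2 4*M 3 3*M 4 2*M 5 0)))))) + ((((M 0 2*M 1 0*M 2 1*M 3 3*M 4 4*M 5 5 + (-(M 0 2*M 1 0*M 2 1*M 3 3*M 4 5*M 5 4))) + ((-(M 0 2*M 1 0*M 2 1*M 3 4*M 4 3*M 5 5)) + M 0 2*M 1 0*M 2 1*M 3 4*M 4 5*M 5 3)) + ((M 0 2*M 1 0*M 2 1*M 3 5*M 4 3*M 5 4 + (-(M 0 2*M 1 0*M 2 1*M 3 5*M 4 4*M 5 3))) + ((-(M 0 2*M 1 0*M 2 3*M 3 1*M 4 4*M 5 5)) + M 0 2*M 1 0*M 2 3*M 3 1*M 4 5*M 5 4))) + (((M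 0 2*M 1 0*M 2 3*M 3 4*M 4 1*M 5 5 + (-(M 0 2*M 1 0*M 2 3*M 3 4*M 4 5*M 5 1))) + ((-(M 0 2*M 1 0*M 2 3*M 3 5*M 4 1*M 5 4)) + M 0 2*M 1 0*M 2 3*M 3 5*M 4 4*M 5 1)) + ((M 0 2*M 1 0*M 2 4*M 3 1*M 4 3*M 5 5 + (-(M 0 2*M 1 0*M 2 4*M 3 1*M 4 5*M 5 3))) + ((-(M 0 2*M 1 0*M 2 4*M 3 3*M 4 1*M 5 5)) + M 0 2*M 1 0*M 2 4*M 3 3*M 4 5*M 5 1)))))))) + ((((((((M 0 2*M 1 0*M 2 4*M 3 5*M 4 1*M 5 3 + (-(M 0 2*M 1 0*M 2 4*M 3 5*M 4 3*M 5 1))) + ((-(M 0 2*M 1 0*M 2 5*M 3 1*M 4 3*M 5 4)) + M 0 2*M 1 0*M 2 5*M 3 1*M 4 4*M 5 3)) + ((M 0 2*M 1 0*M 2 5*M 3 3*M 4 1*M 5 4 + (-(M 0 2*M 1 0*M 2 5*M 3 3*M 4 4*M 5 1))) + ((-(M 0 2*M 1 0*M 2 5*M 3 4*M 4 1*M 5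 3)) + M 0 2*M 1 0*M 2 5*M 3 4*M 4 3*M 5 1))) + ((((-(M 0 2*M 1 1*M 2 0*M 3 3*M 4 4*M 5 5)) + M 0 2*M 1 1*M 2 0*M 3 3*M 4 5*M 5 4) + (M 0 2*M 1 1*M 2 0*M 3 4*M 4 3*M 5 5 + (-(M 0 2*M 1 1*M 2 0*M 3 4*M 4 5*M 5 3)))) + (((-(M 0 2*M 1 1*M 2 0*M 3 5*M 4 3*M 5 4)) + M 0 2*M 1 1*M 2 0*M 3 5*M 4 4*M 5 3) + (M 0 2*M 1 1*M 2 3*M 3 0*M 4 4*M 5 5 + (-(M 0 2*M 1 1*M 2 3*M 3 0*M 4 5*M 5 4)))))) + (((((-(M 0 2*M 1 1*M 2 3*M 3 4*M 4 0*M 5 5)) + M 0 2*M 1 1*M 2 3*M 3 4*M 4 5*M 5 0) + (M 0 2*M 1 1*M 2 3*M 3 5*M 4 0*M 5 4 + (-(M 0 2*M 1 1*M 2 3*M 3 5*M 4 4*M 5 0)))) + (((-(M 0 2*M 1 1*M 2 4*M 3 0*M 4 3*M 5 5)) + M 0 2*M 1 1*M 2 4*M 3 0*M 4 5*M 5 3)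 + (M 0 2*M 1 1*M 2 4*M 3 3*M 4 0*M 5 5 + (-(M 0 2*M 1 1*M 2 4*M 3 3*M 4 5*M 5 0))))) + ((((-(M 0 2*M 1 1*M 2 4*M 3 5*M 4 0*M 5 3)) + M 0 2*M 1 1*M 2 4*M 3 5*M 4 3*M 5 0) + (M 0 2*M 1 1*M 2 5*M 3 0*M 4 3*M 5 4 + (-(M 0 2*M 1 1*M 2 5*M 3 0*M 4 4*M 5 3)))) + (((-(M 0 2*M 1 1*M 2 5*M 3 3*M 4 0*M 5 4)) + M 0 2*M 1 1*M 2 5*M 3 3*M 4 4*M 5 0) + (M 0 2*M 1 1*M 2 5*M 3 4*M 4 0*M 5 3 + (-(M 0 2*M 1 1*M 2 5*M 3 4*M 4 3*M 5 0))))))) + (((((M 0 2*M 1 3*M 2 0*M 3 1*M 4 4*M 5 5 + (-(M 0 2*M 1 3*M 2 0*M 3 1*M 4 5*M 5 4))) + ((-(M 0 2*M 1 3*M 2 0*M 3 4*M 4 1*M 5 5)) + M 0 2*M 1 3*M 2 0*M 3 4*M 4 5*M 5 1)) + ((M 0 2*M 1 3*M 2 0*M 3 5*M 4 1*M 5 4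 + (-(M 0 2*M 1 3*M 2 0*M 3 5*M 4 4*M 5 1))) + ((-(M 0 2*M 1 3*M 2 1*M 3 0*M 4 4*M 5 5)) + M 0 2*M 1 3*M 2 1*M 3 0*M 4 5*M 5 4))) + (((M 0 2*M 1 3*M 2 1*M 3 4*M 4 0*M 5 5 + (-(M 0 2*M 1 3*M 2 1*M 3 4*M 4 5*M 5 0))) + ((-(M 0 2*M 1 3*M 2 1*M 3 5*M 4 0*M 5 4)) + M 0 2*M 1 3*M 2 1*M 3 5*M 4 4*M 5 0)) + ((M 0 2*M 1 3*M 2 4*M 3 0*M 4 1*M 5 5 + (-(M 0 2*M 1 3*M 2 4*M 3 0*M 4 5*M 5 1))) + ((-(M 0 2*M 1 3*M 2 4*M 3 1*M 4 0*M 5 5)) + M 0 2*M 1 3*M 2 4*M 3 1*M 4 5*M 5 0)))) + ((((M 0 2*M 1 3*M 2 4*M 3 5*M 4 0*M 5 1 + (-(M 0 2*M 1 3*M 2 4*M 3 5*M 4 1*M 5 0))) + ((-(M 0 2*M 1 3*M 2 5*M 3 0*M 4 1*M 5 4)) + M 0 2*M 1 3*M 2 5*M 3 0*M 4 4*M 5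 1)) + ((M 0 2*M 1 3*M 2 5*M 3 1*M 4 0*M 5 4 + (-(M 0 2*M 1 3*M 2 5*M 3 1*M 4 4*M 5 0))) + ((-(M 0 2*M 1 3*M 2 5*M 3 4*M 4 0*M 5 1)) + M 0 2*M 1 3*M 2 5*M 3 4*M 4 1*M 5 0))) + ((((-(M 0 2*M 1 4*M 2 0*M 3 1*M 4 3*M 5 5)) + M 0 2*M 1 4*M 2 0*M 3 1*M 4 5*M 5 3) + (M 0 2*M 1 4*M 2 0*M 3 3*M 4 1*M 5 5 + (-(M 0 2*M 1 4*M 2 0*M 3 3*M 4 5*M 5 1)))) + (((-(M 0 2*M 1 4*M 2 0*M 3 5*M 4 1*M 5 3)) + M 0 2*M 1 4*M 2 0*M 3 5*M 4 3*M 5 1) + (M 0 2*M 1 4*M 2 1*M 3 0*M 4 3*M 5 5 + (-(M 0 2*M 1 4*M 2 1*M 3 0*M 4 5*M 5 3)))))))) + (((((((-(M 0 2*M 1 4*M 2 1*M 3 3*M 4 0*M 5 5)) + M 0 2*M 1 4*M 2 1*M 3 3*M 4 5*M 5 0) + (M 0 2*M 1 4*M 2 1*M 3 5*M 4 0*M 5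 3 + (-(M 0 2*M 1 4*M 2 1*M 3 5*M 4 3*M 5 0)))) + (((-(M 0 2*M 1 4*M 2 3*M 3 0*M 4 1*M 5 5)) + M 0 2*M 1 4*M 2 3*M 3 0*M 4 5*M 5 1) + (M 0 2*M 1 4*M 2 3*M 3 1*M 4 0*M 5 5 + (-(M 0 2*M 1 4*M 2 3*M 3 1*M 4 5*M 5 0))))) + ((((-(M 0 2*M 1 4*M 2 3*M 3 5*M 4 0*M 5 1)) + M 0 2*M 1 4*M 2 3*M 3 5*M 4 1*M 5 0) + (M 0 2*M 1 4*M 2 5*M 3 0*M 4 1*M 5 3 + (-(M 0 2*M 1 4*M 2 5*M 3 0*M 4 3*M 5 1)))) + (((-(M 0 2*M 1 4*M 2 5*M 3 1*M 4 0*M 5 3)) + M 0 2*M 1 4*M 2 5*M 3 1*M 4 3*M 5 0) + (M 0 2*M 1 4*M 2 5*M 3 3*M 4 0*M 5 1 + (-(M 0 2*M 1 4*M 2 5*M 3 3*M 4 1*M 5 0)))))) + ((((M 0 2*M 1 5*M 2 0*M 3 1*M 4 3*M 5 4 + (-(M 0 2*M 1 5*M 2 0*M 3 1*M 4 4*M 5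 3))) + ((-(M 0 2*M 1 5*M 2 0*M 3 3*M 4 1*M 5 4)) + M 0 2*M 1 5*M 2 0*M 3 3*M 4 4*M 5 1)) + ((M 0 2*M 1 5*M 2 0*M 3 4*M 4 1*M 5 3 + (-(M 0 2*M 1 5*M 2 0*M 3 4*M 4 3*M 5 1))) + ((-(M 0 2*M 1 5*M 2 1*M 3 0*M 4 3*M 5 4)) + M 0 2*M 1 5*M 2 1*M 3 0*M 4 4*M 5 3))) + (((M 0 2*M 1 5*M 2 1*M 3 3*M 4 0*M 5 4 + (-(M 0 2*M 1 5*M 2 1*M 3 3*M 4 4*M 5 0))) + ((-(M 0 2*M 1 5*M 2 1*M 3 4*M 4 0*M 5 3)) + M 0 2*M 1 5*M 2 1*M 3 4*M 4 3*M 5 0)) + ((M 0 2*M 1 5*M 2 3*M 3 0*M 4 1*M 5 4 + (-(M 0 2*M 1 5*M 2 3*M 3 0*M 4 4*M 5 1))) + ((-(M 0 2*M 1 5*M 2 3*M 3 1*M 4 0*M 5 4)) + M 0 2*M 1 5*M 2 3*M 3 1*M 4 4*M 5 0))))) + (((((M 0 2*M 1 5*M 2 3*M 3 4*M 4 0*M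 5 1 + (-(M 0 2*M 1 5*M 2 3*M 3 4*M 4 1*M 5 0))) + ((-(M 0 2*M 1 5*M 2 4*M 3 0*M 4 1*M 5 3)) + M 0 2*M 1 5*M 2 4*M 3 0*M 4 3*M 5 1)) + ((M 0 2*M 1 5*M 2 4*M 3 1*M 4 0*M 5 3 + (-(M 0 2*M 1 5*M 2 4*M 3 1*M 4 3*M 5 0))) + ((-(M 0 2*M 1 5*M 2 4*M 3 3*M 4 0*M 5 1)) + M 0 2*M 1 5*M 2 4*M 3 3*M 4 1*M 5 0))) + ((((-(M 0 3*M 1 0*M 2 1*M 3 2*M 4 4*M 5 5)) + M 0 3*M 1 0*M 2 1*M 3 2*M 4 5*M 5 4) + (M 0 3*M 1 0*M 2 1*M 3 4*M 4 2*M 5 5 + (-(M 0 3*M 1 0*M 2 1*M 3 4*M 4 5*M 5 2)))) + (((-(M 0 3*M 1 0*M 2 1*M 3 5*M 4 2*M 5 4)) + M 0 3*M 1 0*M 2 1*M 3 5*M 4 4*M 5 2) + (M 0 3*M 1 0*M 2 2*M 3 1*M 4 4*M 5 5 + (-(M 0 3*M 1 0*M 2 2*M 3 1*M 4 5*M 5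 4)))))) + (((((-(M 0 3*M 1 0*M 2 2*M 3 4*M 4 1*M 5 5)) + M 0 3*M 1 0*M 2 2*M 3 4*M 4 5*M 5 1) + (M 0 3*M 1 0*M 2 2*M 3 5*M 4 1*M 5 4 + (-(M 0 3*M 1 0*M 2 2*M 3 5*M 4 4*M 5 1)))) + (((-(M 0 3*M 1 0*M 2 4*M 3 1*M 4 2*M 5 5)) + M 0 3*M 1 0*M 2 4*M 3 1*M 4 5*M 5 2) + (M 0 3*M 1 0*M 2 4*M 3 2*M 4 1*M 5 5 + (-(M 0 3*M 1 0*M 2 4*M 3 2*M 4 5*M 5 1))))) + ((((-(M 0 3*M 1 0*M 2 4*M 3 5*M 4 1*M 5 2)) + M 0 3*M 1 0*M 2 4*M 3 5*M 4 2*M 5 1) + (M 0 3*M 1 0*M 2 5*M 3 1*M 4 2*M 5 4 + (-(M 0 3*M 1 0*M 2 5*M 3 1*M 4 4*M 5 2)))) + (((-(M 0 3*M 1 0*M 2 5*M 3 2*M 4 1*M 5 4)) + M 0 3*M 1 0*M 2 5*M 3 2*M 4 4*M 5 1) + (M 0 3*M 1 0*M 2 5*M 3 4*M 4 1*M 5 2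 + (-(M 0 3*M 1 0*M 2 5*M 3 4*M 4 2*M 5 1))))))))) + (((((((M 0 3*M 1 1*M 2 0*M 3 2*M 4 4*M 5 5 + (-(M 0 3*M 1 1*M 2 0*M 3 2*M 4 5*M 5 4))) + ((-(M 0 3*M 1 1*M 2 0*M 3 4*M 4 2*M 5 5)) + M 0 3*M 1 1*M 2 0*M 3 4*M 4 5*M 5 2)) + ((M 0 3*M 1 1*M 2 0*M 3 5*M 4 2*M 5 4 + (-(M 0 3*M 1 1*M 2 0*M 3 5*M 4 4*M 5 2))) + ((-(M 0 3*M 1 1*M 2 2*M 3 0*M 4 4*M 5 5)) + M 0 3*M 1 1*M 2 2*M 3 0*M 4 5*M 5 4))) + (((M 0 3*M 1 1*M 2 2*M 3 4*M 4 0*M 5 5 + (-(M 0 3*M 1 1*M 2 2*M 3 4*M 4 5*M 5 0))) + ((-(M 0 3*M 1 1*M 2 2*M 3 5*M 4 0*M 5 4)) + M 0 3*M 1 1*M 2 2*M 3 5*M 4 4*M 5 0)) + ((M 0 3*M 1 1*M 2 4*M 3 0*M 4 2*M 5 5 + (-(M 0 3*M 1 1*M 2 4*M 3 0*M 4 5*M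 5 2))) + ((-(M 0 3*M 1 1*M 2 4*M 3 2*M 4 0*M 5 5)) + M 0 3*M 1 1*M 2 4*M 3 2*M 4 5*M 5 0)))) + ((((M 0 3*M 1 1*M 2 4*M 3 5*M 4 0*M 5 2 + (-(M 0 3*M 1 1*M 2 4*M 3 5*M 4 2*M 5 0))) + ((-(M 0 3*M 1 1*M 2 5*M 3 0*M 4 2*M 5 4)) + M 0 3*M 1 1*M 2 5*M 3 0*M 4 4*M 5 2)) + ((M 0 3*M 1 1*M 2 5*M 3 2*M 4 0*M 5 4 + (-(M 0 3*M 1 1*M 2 5*M 3 2*M 4 4*M 5 0))) + ((-(M 0 3*M 1 1*M 2 5*M 3 4*M 4 0*M 5 2)) + M 0 3*M 1 1*M 2 5*M 3 4*M 4 2*M 5 0))) + ((((-(M 0 3*M 1 2*M 2 0*M 3 1*M 4 4*M 5 5)) + M 0 3*M 1 2*M 2 0*M 3 1*M 4 5*M 5 4) + (M 0 3*M 1 2*M 2 0*M 3 4*M 4 1*M 5 5 + (-(M 0 3*M 1 2*M 2 0*M 3 4*M 4 5*M 5 1)))) + (((-(M 0 3*M 1 2*M 2 0*M 3 5*M 4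 1*M 5 4)) + M 0 3*M 1 2*M 2 0*M 3 5*M 4 4*M 5 1) + (M 0 3*M 1 2*M 2 1*M 3 0*M 4 4*M 5 5 + (-(M 0 3*M 1 2*M 2 1*M 3 0*M 4 5*M 5 4))))))) + ((((((-(M 0 3*M 1 2*M 2 1*M 3 4*M 4 0*M 5 5)) + M 0 3*M 1 2*M 2 1*M 3 4*M 4 5*M 5 0) + (M 0 3*M 1 2*M 2 1*M 3 5*M 4 0*M 5 4 + (-(M 0 3*M 1 2*M 2 1*M 3 5*M 4 4*M 5 0)))) + (((-(M 0 3*M 1 2*M 2 4*M 3 0*M 4 1*M 5 5)) + M 0 3*M 1 2*M 2 4*M 3 0*M 4 5*M 5 1) + (M 0 3*M 1 2*M 2 4*M 3 1*M 4 0*M 5 5 + (-(M 0 3*M 1 2*M 2 4*M 3 1*M 4 5*M 5 0))))) + ((((-(M 0 3*M 1 2*M 2 4*M 3 5*M 4 0*M 5 1)) + M 0 3*M 1 2*M 2 4*M 3 5*M 4 1*M 5 0) + (M 0 3*M 1 2*M 2 5*M 3 0*M 4 1*M 5 4 + (-(M 0 3*M 1 2*M 2 5*M 3 0*M 4 4*M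 5 1)))) + (((-(M 0 3*M 1 2*M 2 5*M 3 1*M 4 0*M 5 4)) + M 0 3*M 1 2*M 2 5*M 3 1*M 4 4*M 5 0) + (M 0 3*M 1 2*M 2 5*M 3 4*M 4 0*M 5 1 + (-(M 0 3*M 1 2*M 2 5*M 3 4*M 4 1*M 5 0)))))) + ((((M 0 3*M 1 4*M 2 0*M 3 1*M 4 2*M 5 5 + (-(M 0 3*M 1 4*M 2 0*M 3 1*M 4 5*M 5 2))) + ((-(M 0 3*M 1 4*M 2 0*M 3 2*M 4 1*M 5 5)) + M 0 3*M 1 4*M 2 0*M 3 2*M 4 5*M 5 1)) + ((M 0 3*M 1 4*M 2 0*M 3 5*M 4 1*M 5 2 + (-(M 0 3*M 1 4*M 2 0*M 3 5*M 4 2*M 5 1))) + ((-(M 0 3*M 1 4*M 2 1*M 3 0*M 4 2*M 5 5)) + M 0 3*M 1 4*M 2 1*M 3 0*M 4 5*M 5 2))) + (((M 0 3*M 1 4*M 2 1*M 3 2*M 4 0*M 5 5 + (-(M 0 3*M 1 4*M 2 1*M 3 2*M 4 5*M 5 0))) + ((-(M 0 3*M 1 4*M 2 1*M 3 5*M 4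 0*M 5 2)) + M 0 3*M 1 4*M 2 1*M 3 5*M 4 2*M 5 0)) + ((M 0 3*M 1 4*M 2 2*M 3 0*M 4 1*M 5 5 + (-(M 0 3*M 1 4*M 2 2*M 3 0*M 4 5*M 5 1))) + ((-(M 0 3*M 1 4*M 2 2*M 3 1*M 4 0*M 5 5)) + M 0 3*M 1 4*M 2 2*M 3 1*M 4 5*M 5 0)))))) + ((((((M 0 3*M 1 4*M 2 2*M 3 5*M 4 0*M 5 1 + (-(M 0 3*M 1 4*M 2 2*M 3 5*M 4 1*M 5 0))) + ((-(M 0 3*M 1 4*M 2 5*M 3 0*M 4 1*M 5 2)) + M 0 3*M 1 4*M 2 5*M 3 0*M 4 2*M 5 1)) + ((M 0 3*M 1 4*M 2 5*M 3 1*M 4 0*M 5 2 + (-(M 0 3*M 1 4*M 2 5*M 3 1*M 4 2*M 5 0))) + ((-(M 0 3*M 1 4*M 2 5*M 3 2*M 4 0*M 5 1)) + M 0 3*M 1 4*M 2 5*M 3 2*M 4 1*M 5 0))) + ((((-(M 0 3*M 1 5*M 2 0*M 3 1*M 4 2*M 5 4)) + M 0 3*M 1 5*M 2 0*M 3 1*M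 4 4*M 5 2) + (M 0 3*M 1 5*M 2 0*M 3 2*M 4 1*M 5 4 + (-(M 0 3*M 1 5*M 2 0*M 3 2*M 4 4*M 5 1)))) + (((-(M 0 3*M 1 5*M 2 0*M 3 4*M 4 1*M 5 2)) + M 0 3*M 1 5*M 2 0*M 3 4*M 4 2*M 5 1) + (M 0 3*M 1 5*M 2 1*M 3 0*M 4 2*M 5 4 + (-(M 0 3*M 1 5*M 2 1*M 3 0*M 4 4*M 5 2)))))) + (((((-(M 0 3*M 1 5*M 2 1*M 3 2*M 4 0*M 5 4)) + M 0 3*M 1 5*M 2 1*M 3 2*M 4 4*M 5 0) + (M 0 3*M 1 5*M 2 1*M 3 4*M 4 0*M 5 2 + (-(M 0 3*M 1 5*M 2 1*M 3 4*M 4 2*M 5 0)))) + (((-(M 0 3*M 1 5*M 2 2*M 3 0*M 4 1*M 5 4)) + M 0 3*M 1 5*M 2 2*M 3 0*M 4 4*M 5 1) + (M 0 3*M 1 5*M 2 2*M 3 1*M 4 0*M 5 4 + (-(M 0 3*M 1 5*M 2 2*M 3 1*M 4 4*M 5 0))))) + ((((-(M 0 3*M 1 5*M 2 2*M 3 4*M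 4 0*M 5 1)) + M 0 3*M 1 5*M 2 2*M 3 4*M 4 1*M 5 0) + (M 0 3*M 1 5*M 2 4*M 3 0*M 4 1*M 5 2 + (-(M 0 3*M 1 5*M 2 4*M 3 0*M 4 2*M 5 1)))) + (((-(M 0 3*M 1 5*M 2 4*M 3 1*M 4 0*M 5 2)) + M 0 3*M 1 5*M 2 4*M 3 1*M 4 2*M 5 0) + (M 0 3*M 1 5*M 2 4*M 3 2*M 4 0*M 5 1 + (-(M 0 3*M 1 5*M 2 4*M 3 2*M 4 1*M 5 0))))))) + (((((M 0 4*M 1 0*M 2 1*M 3 2*M 4 3*M 5 5 + (-(M 0 4*M 1 0*M 2 1*M 3 2*M 4 5*M 5 3))) + ((-(M 0 4*M 1 0*M 2 1*M 3 3*M 4 2*M 5 5)) + M 0 4*M 1 0*M 2 1*M 3 3*M 4 5*M 5 2)) + ((M 0 4*M 1 0*M 2 1*M 3 5*M 4 2*M 5 3 + (-(M 0 4*M 1 0*M 2 1*M 3 5*M 4 3*M 5 2))) + ((-(M 0 4*M 1 0*M 2 2*M 3 1*M 4 3*M 5 5)) + M 0 4*M 1 0*M 2 2*M 3 1*M 4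 5*M 5 3))) + (((M 0 4*M 1 0*M 2 2*M 3 3*M 4 1*M 5 5 + (-(M 0 4*M 1 0*M 2 2*M 3 3*M 4 5*M 5 1))) + ((-(M 0 4*M 1 0*M 2 2*M 3 5*M 4 1*M 5 3)) + M 0 4*M 1 0*M 2 2*M 3 5*M 4 3*M 5 1)) + ((M 0 4*M 1 0*M 2 3*M 3 1*M 4 2*M 5 5 + (-(M 0 4*M 1 0*M 2 3*M 3 1*M 4 5*M 5 2))) + ((-(M 0 4*M 1 0*M 2 3*M 3 2*M 4 1*M 5 5)) + M 0 4*M 1 0*M 2 3*M 3 2*M 4 5*M 5 1)))) + ((((M 0 4*M 1 0*M 2 3*M 3 5*M 4 1*M 5 2 + (-(M 0 4*M 1 0*M 2 3*M 3 5*M 4 2*M 5 1))) + ((-(M 0 4*M 1 0*M 2 5*M 3 1*M 4 2*M 5 3)) + M 0 4*M 1 0*M 2 5*M 3 1*M 4 3*M 5 2)) + ((M 0 4*M 1 0*M 2 5*M 3 2*M 4 1*M 5 3 + (-(M 0 4*M 1 0*M 2 5*M 3 2*M 4 3*M 5 1))) + ((-(M 0 4*M 1 0*M 2 5*M 3 3*M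 4 1*M 5 2)) + M 0 4*M 1 0*M 2 5*M 3 3*M 4 2*M 5 1))) + ((((-(M 0 4*M 1 1*M 2 0*M 3 2*M 4 3*M 5 5)) + M 0 4*M 1 1*M 2 0*M 3 2*M 4 5*M 5 3) + (M 0 4*M 1 1*M 2 0*M 3 3*M 4 2*M 5 5 + (-(M 0 4*M 1 1*M 2 0*M 3 3*M 4 5*M 5 2)))) + (((-(M 0 4*M 1 1*M 2 0*M 3 5*M 4 2*M 5 3)) + M 0 4*M 1 1*M 2 0*M 3 5*M 4 3*M 5 2) + (M 0 4*M 1 1*M 2 2*M 3 0*M 4 3*M 5 5 + (-(M 0 4*M 1 1*M 2 2*M 3 0*M 4 5*M 5 3))))))))))) + (((((((((-(M 0 4*M 1 1*M 2 2*M 3 3*M 4 0*M 5 5)) + M 0 4*M 1 1*M 2 2*M 3 3*M 4 5*M 5 0) + (M 0 4*M 1 1*M 2 2*M 3 5*M 4 0*M 5 3 + (-(M 0 4*M 1 1*M 2 2*M 3 5*M 4 3*M 5 0)))) + (((-(M 0 4*M 1 1*M 2 3*M 3 0*M 4 2*M 5 5)) + M 0 4*M 1 1*M 2 3*M 3 0*M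 4 5*M 5 2) + (M 0 4*M 1 1*M 2 3*M 3 2*M 4 0*M 5 5 + (-(M 0 4*M 1 1*M 2 3*M 3 2*M 4 5*M 5 0))))) + ((((-(M 0 4*M 1 1*M 2 3*M 3 5*M 4 0*M 5 2)) + M 0 4*M 1 1*M 2 3*M 3 5*M 4 2*M 5 0) + (M 0 4*M 1 1*M 2 5*M 3 0*M 4 2*M 5 3 + (-(M 0 4*M 1 1*M 2 5*M 3 0*M 4 3*M 5 2)))) + (((-(M 0 4*M 1 1*M 2 5*M 3 2*M 4 0*M 5 3)) + M 0 4*M 1 1*M 2 5*M 3 2*M 4 3*M 5 0) + (M 0 4*M 1 1*M 2 5*M 3 3*M 4 0*M 5 2 + (-(M 0 4*M 1 1*M 2 5*M 3 3*M 4 2*M 5 0)))))) + ((((M 0 4*M 1 2*M 2 0*M 3 1*M 4 3*M 5 5 + (-(M 0 4*M 1 2*M 2 0*M 3 1*M 4 5*M 5 3))) + ((-(M 0 4*M 1 2*M 2 0*M 3 3*M 4 1*M 5 5)) + M 0 4*M 1 2*M 2 0*M 3 3*M 4 5*M 5 1)) + ((M 0 4*M 1 2*M 2 0*M 3 5*M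 4 1*M 5 3 + (-(M 0 4*M 1 2*M 2 0*M 3 5*M 4 3*M 5 1))) + ((-(M 0 4*M 1 2*M 2 1*M 3 0*M 4 3*M 5 5)) + M 0 4*M 1 2*M 2 1*M 3 0*M 4 5*M 5 3))) + (((M 0 4*M 1 2*M 2 1*M 3 3*M 4 0*M 5 5 + (-(M 0 4*M 1 2*M 2 1*M 3 3*M 4 5*M 5 0))) + ((-(M 0 4*M 1 2*M 2 1*M 3 5*M 4 0*M 5 3)) + M 0 4*M 1 2*M 2 1*M 3 5*M 4 3*M 5 0)) + ((M 0 4*M 1 2*M 2 3*M 3 0*M 4 1*M 5 5 + (-(M 0 4*M 1 2*M 2 3*M 3 0*M 4 5*M 5 1))) + ((-(M 0 4*M 1 2*M 2 3*M 3 1*M 4 0*M 5 5)) + M 0 4*M 1 2*M 2 3*M 3 1*M 4 5*M 5 0))))) + (((((M 0 4*M 1 2*M 2 3*M 3 5*M 4 0*M 5 1 + (-(M 0 4*M 1 2*M 2 3*M 3 5*M 4 1*M 5 0))) + ((-(M 0 4*M 1 2*M 2 5*M 3 0*M 4 1*M 5 3)) + M 0 4*M 1 2*M 2 5*M 3 0*M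 4 3*M 5 1)) + ((M 0 4*M 1 2*M 2 5*M 3 1*M 4 0*M 5 3 + (-(M 0 4*M 1 2*M 2 5*M 3 1*M 4 3*M 5 0))) + ((-(M 0 4*M 1 2*M 2 5*M 3 3*M 4 0*M 5 1)) + M 0 4*M 1 2*M 2 5*M 3 3*M 4 1*M 5 0))) + ((((-(M 0 4*M 1 3*M 2 0*M 3 1*M 4 2*M 5 5)) + M 0 4*M 1 3*M 2 0*M 3 1*M 4 5*M 5 2) + (M 0 4*M 1 3*M 2 0*M 3 2*M 4 1*M 5 5 + (-(M 0 4*M 1 3*M 2 0*M 3 2*M 4 5*M 5 1)))) + (((-(M 0 4*M 1 3*M 2 0*M 3 5*M 4 1*M 5 2)) + M 0 4*M 1 3*M 2 0*M 3 5*M 4 2*M 5 1) + (M 0 4*M 1 3*M 2 1*M 3 0*M 4 2*M 5 5 + (-(M 0 4*M 1 3*M 2 1*M 3 0*M 4 5*M 5 2)))))) + (((((-(M 0 4*M 1 3*M 2 1*M 3 2*M 4 0*M 5 5)) + M 0 4*M 1 3*M 2 1*M 3 2*M 4 5*M 5 0) + (M 0 4*M 1 3*M 2 1*M 3 5*M 4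 0*M 5 2 + (-(M 0 4*M 1 3*M 2 1*M 3 5*M 4 2*M 5 0)))) + (((-(M 0 4*M 1 3*M 2 2*M 3 0*M 4 1*M 5 5)) + M 0 4*M 1 3*M 2 2*M 3 0*M 4 5*M 5 1) + (M 0 4*M 1 3*M 2 2*M 3 1*M 4 0*M 5 5 + (-(M 0 4*M 1 3*M 2 2*M 3 1*M 4 5*M 5 0))))) + ((((-(M 0 4*M 1 3*M 2 2*M 3 5*M 4 0*M 5 1)) + M 0 4*M 1 3*M 2 2*M 3 5*M 4 1*M 5 0) + (M 0 4*M 1 3*M 2 5*M 3 0*M 4 1*M 5 2 + (-(M 0 4*M 1 3*M 2 5*M 3 0*M 4 2*M 5 1)))) + (((-(M 0 4*M 1 3*M 2 5*M 3 1*M 4 0*M 5 2)) + M 0 4*M 1 3*M 2 5*M 3 1*M 4 2*M 5 0) + (M 0 4*M 1 3*M 2 5*M 3 2*M 4 0*M 5 1 + (-(M 0 4*M 1 3*M 2 5*M 3 2*M 4 1*M 5 0)))))))) + ((((((M 0 4*M 1 5*M 2 0*M 3 1*M 4 2*M 5 3 + (-(M 0 4*M 1 5*M 2 0*M 3 1*M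 4 3*M 5 2))) + ((-(M 0 4*M 1 5*M 2 0*M 3 2*M 4 1*M 5 3)) + M 0 4*M 1 5*M 2 0*M 3 2*M 4 3*M 5 1)) + ((M 0 4*M 1 5*M 2 0*M 3 3*M 4 1*M 5 2 + (-(M 0 4*M 1 5*M 2 0*M 3 3*M 4 2*M 5 1))) + ((-(M 0 4*M 1 5*M 2 1*M 3 0*M 4 2*M 5 3)) + M 0 4*M 1 5*M 2 1*M 3 0*M 4 3*M 5 2))) + (((M 0 4*M 1 5*M 2 1*M 3 2*M 4 0*M 5 3 + (-(M 0 4*M 1 5*M 2 1*M 3 2*M 4 3*M 5 0))) + ((-(M 0 4*M 1 5*M 2 1*M 3 3*M 4 0*M 5 2)) + M 0 4*M 1 5*M 2 1*M 3 3*M 4 2*M 5 0)) + ((M 0 4*M 1 5*M 2 2*M 3 0*M 4 1*M 5 3 + (-(M 0 4*M 1 5*M 2 2*M 3 0*M 4 3*M 5 1))) + ((-(M 0 4*M 1 5*M 2 2*M 3 1*M 4 0*M 5 3)) + M 0 4*M 1 5*M 2 2*M 3 1*M 4 3*M 5 0)))) + ((((M 0 4*M 1 5*M 2 2*M 3 3*M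 4 0*M 5 1 + (-(M 0 4*M 1 5*M 2 2*M 3 3*M 4 1*M 5 0))) + ((-(M 0 4*M 1 5*M 2 3*M 3 0*M 4 1*M 5 2)) + M 0 4*M 1 5*M 2 3*M 3 0*M 4 2*M 5 1)) + ((M 0 4*M 1 5*M 2 3*M 3 1*M 4 0*M 5 2 + (-(M 0 4*M 1 5*M 2 3*M 3 1*M 4 2*M 5 0))) + ((-(M 0 4*M 1 5*M 2 3*M 3 2*M 4 0*M 5 1)) + M 0 4*M 1 5*M 2 3*M 3 2*M 4 1*M 5 0))) + ((((-(M 0 5*M 1 0*M 2 1*M 3 2*M 4 3*M 5 4)) + M 0 5*M 1 0*M 2 1*M 3 2*M 4 4*M 5 3) + (M 0 5*M 1 0*M 2 1*M 3 3*M 4 2*M 5 4 + (-(M 0 5*M 1 0*M 2 1*M 3 3*M 4 4*M 5 2)))) + (((-(M 0 5*M 1 0*M 2 1*M 3 4*M 4 2*M 5 3)) + M 0 5*M 1 0*M 2 1*M 3 4*M 4 3*M 5 2) + (M 0 5*M 1 0*M 2 2*M 3 1*M 4 3*M 5 4 + (-(M 0 5*M 1 0*M 2 2*M 3 1*M 4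 4*M 5 3))))))) + ((((((-(M 0 5*M 1 0*M 2 2*M 3 3*M 4 1*M 5 4)) + M 0 5*M 1 0*M 2 2*M 3 3*M 4 4*M 5 1) + (M 0 5*M 1 0*M 2 2*M 3 4*M 4 1*M 5 3 + (-(M 0 5*M 1 0*M 2 2*M 3 4*M 4 3*M 5 1)))) + (((-(M 0 5*M 1 0*M 2 3*M 3 1*M 4 2*M 5 4)) + M 0 5*M 1 0*M 2 3*M 3 1*M 4 4*M 5 2) + (M 0 5*M 1 0*M 2 3*M 3 2*M 4 1*M 5 4 + (-(M 0 5*M 1 0*M 2 3*M 3 2*M 4 4*M 5 1))))) + ((((-(M 0 5*M 1 0*M 2 3*M 3 4*M 4 1*M 5 2)) + M 0 5*M 1 0*M 2 3*M 3 4*M 4 2*M 5 1) + (M 0 5*M 1 0*M 2 4*M 3 1*M 4 2*M 5 3 + (-(M 0 5*M 1 0*M 2 4*M 3 1*M 4 3*M 5 2)))) + (((-(M 0 5*M 1 0*M 2 4*M 3 2*M 4 1*M 5 3)) + M 0 5*M 1 0*M 2 4*M 3 2*M 4 3*M 5 1) + (M 0 5*M 1 0*M 2 4*M 3 3*M 4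 1*M 5 2 + (-(M 0 5*M 1 0*M 2 4*M 3 3*M 4 2*M 5 1)))))) + ((((M 0 5*M 1 1*M 2 0*M 3 2*M 4 3*M 5 4 + (-(M 0 5*M 1 1*M 2 0*M 3 2*M 4 4*M 5 3))) + ((-(M 0 5*M 1 1*M 2 0*M 3 3*M 4 2*M 5 4)) + M 0 5*M 1 1*M 2 0*M 3 3*M 4 4*M 5 2)) + ((M 0 5*M 1 1*M 2 0*M 3 4*M 4 2*M 5 3 + (-(M 0 5*M 1 1*M 2 0*M 3 4*M 4 3*M 5 2))) + ((-(M 0 5*M 1 1*M 2 2*M 3 0*M 4 3*M 5 4)) + M 0 5*M 1 1*M 2 2*M 3 0*M 4 4*M 5 3))) + (((M 0 5*M 1 1*M 2 2*M 3 3*M 4 0*M 5 4 + (-(M 0 5*M 1 1*M 2 2*M 3 3*M 4 4*M 5 0))) + ((-(M 0 5*M 1 1*M 2 2*M 3 4*M 4 0*M 5 3)) + M 0 5*M 1 1*M 2 2*M 3 4*M 4 3*M 5 0)) + ((M 0 5*M 1 1*M 2 3*M 3 0*M 4 2*M 5 4 + (-(M 0 5*M 1 1*M 2 3*M 3 0*M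 4 4*M 5 2))) + ((-(M 0 5*M 1 1*M 2 3*M 3 2*M 4 0*M 5 4)) + M 0 5*M 1 1*M 2 3*M 3 2*M 4 4*M 5 0))))))) + (((((((M 0 5*M 1 1*M 2 3*M 3 4*M 4 0*M 5 2 + (-(M 0 5*M 1 1*M 2 3*M 3 4*M 4 2*M 5 0))) + ((-(M 0 5*M 1 1*M 2 4*M 3 0*M 4 2*M 5 3)) + M 0 5*M 1 1*M 2 4*M 3 0*M 4 3*M 5 2)) + ((M 0 5*M 1 1*M 2 4*M 3 2*M 4 0*M 5 3 + (-(M 0 5*M 1 1*M 2 4*M 3 2*M 4 3*M 5 0))) + ((-(M 0 5*M 1 1*M 2 4*M 3 3*M 4 0*M 5 2)) + M 0 5*M 1 1*M 2 4*M 3 3*M 4 2*M 5 0))) + ((((-(M 0 5*M 1 2*M 2 0*M 3 1*M 4 3*M 5 4)) + M 0 5*M 1 2*M 2 0*M 3 1*M 4 4*M 5 3) + (M 0 5*M 1 2*M 2 0*M 3 3*M 4 1*M 5 4 + (-(M 0 5*M 1 2*M 2 0*M 3 3*M 4 4*M 5 1)))) + (((-(M 0 5*M 1 2*M 2 0*M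 3 4*M 4 1*M 5 3)) + M 0 5*M 1 2*M 2 0*M 3 4*M 4 3*M 5 1) + (M 0 5*M 1 2*M 2 1*M 3 0*M 4 3*M 5 4 + (-(M 0 5*M 1 2*M 2 1*M 3 0*M 4 4*M 5 3)))))) + (((((-(M 0 5*M 1 2*M 2 1*M 3 3*M 4 0*M 5 4)) + M 0 5*M 1 2*M 2 1*M 3 3*M 4 4*M 5 0) + (M 0 5*M 1 2*M 2 1*M 3 4*M 4 0*M 5 3 + (-(M 0 5*M 1 2*M 2 1*M 3 4*M 4 3*M 5 0)))) + (((-(M 0 5*M 1 2*M 2 3*M 3 0*M 4 1*M 5 4)) + M 0 5*M 1 2*M 2 3*M 3 0*M 4 4*M 5 1) + (M 0 5*M 1 2*M 2 3*M 3 1*M 4 0*M 5 4 + (-(M 0 5*M 1 2*M 2 3*M 3 1*M 4 4*M 5 0))))) + ((((-(M 0 5*M 1 2*M 2 3*M 3 4*M 4 0*M 5 1)) + M 0 5*M 1 2*M 2 3*M 3 4*M 4 1*M 5 0) + (M 0 5*M 1 2*M 2 4*M 3 0*M 4 1*M 5 3 + (-(M 0 5*M 1 2*M 2 4*M 3 0*M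 4 3*M 5 1)))) + (((-(M 0 5*M 1 2*M 2 4*M 3 1*M 4 0*M 5 3)) + M 0 5*M 1 2*M 2 4*M 3 1*M 4 3*M 5 0) + (M 0 5*M 1 2*M 2 4*M 3 3*M 4 0*M 5 1 + (-(M 0 5*M 1 2*M 2 4*M 3 3*M 4 1*M 5 0))))))) + (((((M 0 5*M 1 3*M 2 0*M 3 1*M 4 2*M 5 4 + (-(M 0 5*M 1 3*M 2 0*M 3 1*M 4 4*M 5 2))) + ((-(M 0 5*M 1 3*M 2 0*M 3 2*M 4 1*M 5 4)) + M 0 5*M 1 3*M 2 0*M 3 2*M 4 4*M 5 1)) + ((M 0 5*M 1 3*M 2 0*M 3 4*M 4 1*M 5 2 + (-(M 0 5*M 1 3*M 2 0*M 3 4*M 4 2*M 5 1))) + ((-(M 0 5*M 1 3*M 2 1*M 3 0*M 4 2*M 5 4)) + M 0 5*M 1 3*M 2 1*M 3 0*M 4 4*M 5 2))) + (((M 0 5*M 1 3*M 2 1*M 3 2*M 4 0*M 5 4 + (-(M 0 5*M 1 3*M 2 1*M 3 2*M 4 4*M 5 0))) + ((-(M 0 5*M 1 3*M 2 1*M 3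 4*M 4 0*M 5 2)) + M 0 5*M 1 3*M 2 1*M 3 4*M 4 2*M 5 0)) + ((M 0 5*M 1 3*M 2 2*M 3 0*M 4 1*M 5 4 + (-(M 0 5*M 1 3*M 2 2*M 3 0*M 4 4*M 5 1))) + ((-(M 0 5*M 1 3*M 2 2*M 3 1*M 4 0*M 5 4)) + M 0 5*M 1 3*M 2 2*M 3 1*M 4 4*M 5 0)))) + ((((M 0 5*M 1 3*M 2 2*M 3 4*M 4 0*M 5 1 + (-(M 0 5*M 1 3*M 2 2*M 3 4*M 4 1*M 5 0))) + ((-(M 0 5*M 1 3*M 2 4*M 3 0*M 4 1*M 5 2)) + M 0 5*M 1 3*M 2 4*M 3 0*M 4 2*M 5 1)) + ((M 0 5*M 1 3*M 2 4*M 3 1*M 4 0*M 5 2 + (-(M 0 5*M 1 3*M 2 4*M 3 1*M 4 2*M 5 0))) + ((-(M 0 5*M 1 3*M 2 4*M 3 2*M 4 0*M 5 1)) + M 0 5*M 1 3*M 2 4*M 3 2*M 4 1*M 5 0))) + ((((-(M 0 5*M 1 4*M 2 0*M 3 1*M 4 2*M 5 3)) + M 0 5*M 1 4*M 2 0*M 3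 1*M 4 3*M 5 2) + (M 0 5*M 1 4*M 2 0*M 3 2*M 4 1*M 5 3 + (-(M 0 5*M 1 4*M 2 0*M 3 2*M 4 3*M 5 1)))) + (((-(M 0 5*M 1 4*M 2 0*M 3 3*M 4 1*M 5 2)) + M 0 5*M 1 4*M 2 0*M 3 3*M 4 2*M 5 1) + (M 0 5*M 1 4*M 2 1*M 3 0*M 4 2*M 5 3 + (-(M 0 5*M 1 4*M 2 1*M 3 0*M 4 3*M 5 2)))))))) + (((((-(M 0 5*M 1 4*M 2 1*M 3 2*M 4 0*M 5 3)) + M 0 5*M 1 4*M 2 1*M 3 2*M 4 3*M 5 0) + (M 0 5*M 1 4*M 2 1*M 3 3*M 4 0*M 5 2 + (-(M 0 5*M 1 4*M 2 1*M 3 3*M 4 2*M 5 0)))) + (((-(M 0 5*M 1 4*M 2 2*M 3 0*M 4 1*M 5 3)) + M 0 5*M 1 4*M 2 2*M 3 0*M 4 3*M 5 1) + (M 0 5*M 1 4*M 2 2*M 3 1*M 4 0*M 5 3 + (-(M 0 5*M 1 4*M 2 2*M 3 1*M 4 3*M 5 0))))) + ((((-(M 0 5*M 1 4*M 2 2*M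 3 3*M 4 0*M 5 1)) + M 0 5*M 1 4*M 2 2*M 3 3*M 4 1*M 5 0) + (M 0 5*M 1 4*M 2 3*M 3 0*M 4 1*M 5 2 + (-(M 0 5*M 1 4*M 2 3*M 3 0*M 4 2*M 5 1)))) + (((-(M 0 5*M 1 4*M 2 3*M 3 1*M 4 0*M 5 2)) + M 0 5*M 1 4*M 2 3*M 3 1*M 4 2*M 5 0) + (M 0 5*M 1 4*M 2 3*M 3 2*M 4 0*M 5 1 + (-(M 0 5*M 1 4*M 2 3*M 3 2*M 4 1*M 5 0))))))))) := by
  rw [Matrix.det_succ_row_zero]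
  simp only [Fin.sum_univ_succ, Fin.sum_univ_zero, det5, Matrix.submatrix_apply,
    sa3_0_0, sa3_0_1, sa3_1_0, sa3_1_1, sa3_2_0, sa3_2_1, fs3_0, fc3_0, fs3_1, fc3_1, fv3_0, fv3_1, fv3_2, sa4_0_0, sa4_0_1, sa4_0_2, sa4_1_0, sa4_1_1, sa4_1_2, sa4_2_0, sa4_2_1, sa4_2_2, sa4_3_0, sa4_3_1, sa4_3_2, fs4_0, fc4_0, fs4_1, fc4_1, fs4_2, fc4_2, fv4_0, fv4_1, fv4_2, fv4_3, sa5_0_0, sa5_0_1, sa5_0_2, sa5_0_3, sa5_1_0, sa5_1_1, sa5_1_2, sa5_1_3, sa5_2_0, sa5_2_1, sa5_2_2, sa5_2_3, sa5_3_0, sa5_3_1, sa5_3_2, sa5_3_3, sa5_4_0, sa5_4_1, sa5_4_2, sa5_4_3, fs5_0, fc5_0, fs5_1, fc5_1, fs5_2, fc5_2, fs5_3, fc5_3, fv5_0, fv5_1, fv5_2, fv5_3, fv5_4, sa6_0_0, sa6_0_1, sa6_0_2, sa6_0_3, sa6_0_4, sa6_1_0, sa6_1_1, sa6_1_2, sa6_1_3,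 sa6_1_4, sa6_2_0, sa6_2_1, sa6_2_2, sa6_2_3, sa6_2_4, sa6_3_0, sa6_3_1, sa6_3_2, sa6_3_3, sa6_3_4, sa6_4_0, sa6_4_1, sa6_4_2, sa6_4_3, sa6_4_4, sa6_5_0, sa6_5_1, sa6_5_2, sa6_5_3, sa6_5_4, fs6_0, fc6_0, fs6_1, fc6_1, fs6_2, fc6_2, fs6_3, fc6_3, fs6_4, fc6_4, fv6_0, fv6_1, fv6_2, fv6_3, fv6_4, fv6_5]
  norm_num [sa3_0_0, sa3_0_1, sa3_1_0, sa3_1_1, sa3_2_0, sa3_2_1, fs3_0, fc3_0, fs3_1, fc3_1, fv3_0, fv3_1, fv3_2, sa4_0_0, sa4_0_1, sa4_0_2, sa4_1_0, sa4_1_1, sa4_1_2, sa4_2_0, sa4_2_1, sa4_2_2, sa4_3_0, sa4_3_1, sa4_3_2, fs4_0, fc4_0, fs4_1, fc4_1, fs4_2, fc4_2, fv4_0, fv4_1, fv4_2, fv4_3, sa5_0_0, sa5_0_1, sa5_0_2, sa5_0_3, sa5_1_0, sa5_1_1, sa5_1_2, sa5_1_3, sa5_2_0, sa5_2_1, sa5_2_2,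 sa5_2_3, sa5_3_0, sa5_3_1, sa5_3_2, sa5_3_3, sa5_4_0, sa5_4_1, sa5_4_2, sa5_4_3, fs5_0, fc5_0, fs5_1, fc5_1, fs5_2, fc5_2, fs5_3, fc5_3, fv5_0, fv5_1, fv5_2, fv5_3, fv5_4, sa6_0_0, sa6_0_1, sa6_0_2, sa6_0_3, sa6_0_4, sa6_1_0, sa6_1_1, sa6_1_2, sa6_1_3, sa6_1_4, sa6_2_0, sa6_2_1, sa6_2_2, sa6_2_3, sa6_2_4, sa6_3_0, sa6_3_1, sa6_3_2, sa6_3_3, sa6_3_4, sa6_4_0, sa6_4_1, sa6_4_2, sa6_4_3, sa6_4_4, sa6_5_0, sa6_5_1, sa6_5_2, sa6_5_3, sa6_5_4, fs6_0, fc6_0, fs6_1, fc6_1, fs6_2, fc6_2, fs6_3, fc6_3, fs6_4, fc6_4, fv6_0, fv6_1, fv6_2, fv6_3, fv6_4, fv6_5]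
  ring

/-- The twistor map `Ψ(z,w,μ) = (z² − μ conj(w)², zw + conj(z)conj(w)μ, w² − μ conj(z)²)`,
viewed as a smooth (but not holomorphic) map `ℝ⁶ ≅ ℂ×ℂ×ℂ → ℂ×ℂ×ℂ ≅ ℝ⁶`. -/
noncomputable def twistorPsi : ℂ × ℂ × ℂ → ℂ × ℂ × ℂ := fun p =>
  (p.1^2 - p.2.2 * (starRingEnd ℂ) p.2.1 ^ 2,
   p.1 * p.2.1 + (starRingEnd ℂ) p.1 * (starRingEnd ℂ) p.2.1 * p.2.2,
   p.2.1^2 - p.2.2 * (starRingEnd ℂ) p.1 ^ 2)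

noncomputable def conjL : ℂ →L[ℝ] ℂ := Complex.conjCLE.toContinuousLinearMap

/-- The (real) derivative of `twistorPsi` at `(z,w,μ)`. -/
noncomputable def twistorD (z w μ : ℂ) : ℂ × ℂ × ℂ →L[ℝ] ℂ × ℂ × ℂ :=
  let π₁ : ℂ × ℂ × ℂ →L[ℝ] ℂ := ContinuousLinearMap.fst ℝ ℂ (ℂ × ℂ)
  let π₂ : ℂ × ℂ × ℂ →L[ℝ] ℂ :=
    (ContinuousLinearMap.fst ℝ ℂ ℂ).comp (ContinuousLinearMap.snd ℝ ℂ (ℂ × ℂ))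
  let π₃ : ℂ × ℂ × ℂ →L[ℝ] ℂ :=
    (ContinuousLinearMap.snd ℝ ℂ ℂ).comp (ContinuousLinearMap.snd ℝ ℂ (ℂ × ℂ))
  ((2*z) • π₁ - (2*μ*(starRingEnd ℂ) w) • (conjL.comp π₂) - ((starRingEnd ℂ) w^2) • π₃).prod
  ((w • π₁ + (μ*(starRingEnd ℂ) w) • (conjL.comp π₁) + z • π₂ + (μ*(starRingEnd ℂ) z) • (conjL.comp π₂)
     + ((starRingEnd ℂ) z * (starRingEnd ℂ) w) • π₃).prod
   ((2*w) • π₂ - (2*μ*(starRingEnd ℂ) z) • (conjL.comp π₁) - ((starRingEnd ℂ) z^2) • π₃))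

theorem hasFDeriv_twistorPsi (z w μ : ℂ) :
    HasFDerivAt twistorPsi (twistorD z w μ) (z, w, μ) := by
  have hz : HasFDerivAt (fun p : ℂ × ℂ × ℂ => p.1)
      (ContinuousLinearMap.fst ℝ ℂ (ℂ × ℂ)) (z, w, μ) := hasFDerivAt_fst
  have hw : HasFDerivAt (fun p : ℂ × ℂ × ℂ => p.2.1)
      ((ContinuousLinearMap.fst ℝ ℂ ℂ).comp (ContinuousLinearMap.snd ℝ ℂ (ℂ × ℂ))) (z, w, μ) :=
    hasFDerivAt_snd.fst
  have hm : HasFDerivAt (fun p : ℂ × ℂ × ℂ => p.2.2)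
      ((ContinuousLinearMap.snd ℝ ℂ ℂ).comp (ContinuousLinearMap.snd ℝ ℂ (ℂ × ℂ))) (z, w, μ) :=
    hasFDerivAt_snd.snd
  have hcz : HasFDerivAt (fun p : ℂ × ℂ × ℂ => (starRingEnd ℂ) p.1) _ (z, w, μ) :=
    (conjL.hasFDerivAt.comp _ hz)
  have hcw : HasFDerivAt (fun p : ℂ × ℂ × ℂ => (starRingEnd ℂ) p.2.1) _ (z, w, μ) :=
    (conjL.hasFDerivAt.comp _ hw)
  have h1 := ((hz.mul hz).sub (hm.mul (hcw.mul hcw)))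
  have h2 := ((hz.mul hw).add ((hcz.mul hcw).mul hm))
  have h3 := ((hw.mul hw).sub (hm.mul (hcz.mul hcz)))
  have H := h1.prodMk (h2.prodMk h3)
  have heq : twistorPsi = fun p : ℂ × ℂ × ℂ =>
      (p.1*p.1 - p.2.2 * ((starRingEnd ℂ) p.2.1 * (starRingEnd ℂ) p.2.1),
       p.1 * p.2.1 + (starRingEnd ℂ) p.1 * (starRingEnd ℂ) p.2.1 * p.2.2,
       p.2.1*p.2.1 - p.2.2 * ((starRingEnd ℂ) p.1 * (starRingEnd ℂ) p.1)) := by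
    funext p; simp only [twistorPsi]; ring_nf
  rw [heq]
  refine H.congr_fderiv (Eq.symm ?_)
  refine ContinuousLinearMap.ext fun v => ?_
  obtain ⟨a, b, c⟩ := v
  simp only [twistorD, ContinuousLinearMap.prod_apply, ContinuousLinearMap.add_apply,
    ContinuousLinearMap.sub_apply, ContinuousLinearMap.smul_apply, ContinuousLinearMap.comp_apply,
    ContinuousLinearMap.coe_fst', ContinuousLinearMap.coe_snd', ContinuousLinearMap.smulRight_apply,
    ContinuousLinearMap.one_apply, conjL, ContinuousLinearEquiv.coe_coe, Complex.conjCLE_apply,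
    smul_eq_mul, Prod.mk.injEq, Pi.mul_apply]
  refine ⟨by ring, by ring, by ring⟩

theorem twistorD_apply (z w μ : ℂ) (v : ℂ × ℂ × ℂ) :
    twistorD z w μ v =
      (2*z*v.1 - 2*μ*(starRingEnd ℂ) w*(starRingEnd ℂ) v.2.1 - (starRingEnd ℂ) w^2*v.2.2,
       w*v.1 + μ*(starRingEnd ℂ) w*(starRingEnd ℂ) v.1 + z*v.2.1
         + μ*(starRingEnd ℂ) z*(starRingEnd ℂ) v.2.1 + (starRingEnd ℂ) z*(starRingEnd ℂ) w*v.2.2,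
       2*w*v.2.1 - 2*μ*(starRingEnd ℂ) z*(starRingEnd ℂ) v.1 - (starRingEnd ℂ) z^2*v.2.2) := by
  simp only [twistorD, ContinuousLinearMap.prod_apply, ContinuousLinearMap.add_apply,
    ContinuousLinearMap.sub_apply, ContinuousLinearMap.smul_apply, ContinuousLinearMap.comp_apply,
    ContinuousLinearMap.coe_fst', ContinuousLinearMap.coe_snd', conjL,
    ContinuousLinearEquiv.coe_coe, Complex.conjCLE_apply, smul_eq_mul, Prod.mk.injEq]
  all_goals exact ⟨by ring, by ring, by ring⟩

theorem cons_val_five {α : Type*} {m : ℕ} (x : α) (u : Fin (m+5) → α) :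
    Matrix.vecCons x u 5 =
      Matrix.vecHead (Matrix.vecTail (Matrix.vecTail (Matrix.vecTail (Matrix.vecTail u)))) :=
  rfl

noncomputable def b6 : Module.Basis (Fin 2 ⊕ (Fin 2 ⊕ Fin 2)) ℝ (ℂ × ℂ × ℂ) :=
  Complex.basisOneI.prod (Complex.basisOneI.prod Complex.basisOneI)

def e6 : (Fin 2 ⊕ (Fin 2 ⊕ Fin 2)) ≃ Fin 6 where
  toFun := Sum.elim ![0, 1] (Sum.elim ![2, 3] ![4, 5])
  invFun := ![Sum.inl 0, Sum.inl 1, Sum.inr (Sum.inl 0), Sum.inr (Sum.inl 1),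
    Sum.inr (Sum.inr 0), Sum.inr (Sum.inr 1)]
  left_inv := by decide
  right_inv := by decide

/-- The Jacobian matrix of `twistorPsi` in real coordinates. -/
noncomputable def JM (z w μ : ℂ) : Matrix (Fin 6) (Fin 6) ℝ :=
  let zr := z.re; let zi := z.im; let wr := w.re; let wi := w.im; let mr := μ.re; let mi := μ.im
  !![2*zr, -2*zi, -2*mi*wi - 2*mr*wr, -2*mi*wr + 2*mr*wi, wi*wi - wr*wr, -2*wi*wr;
     2*zi, 2*zr, -2*mi*wr + 2*mr*wi, 2*mi*wi + 2*mr*wr, 2*wi*wr, wi*wi - wr*wr;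
     mi*wi + mr*wr + wr, mi*wr - mr*wi - wi, mi*zi + mr*zr + zr, mi*zr - mr*zi - zi, -wi*zi + wr*zr, wi*zr + wr*zi;
     mi*wr - mr*wi + wi, -mi*wi - mr*wr + wr, mi*zr - mr*zi + zi, -mi*zi - mr*zr + zr, -wi*zr - wr*zi, -wi*zi + wr*zr;
     -2*mi*zi - 2*mr*zr, -2*mi*zr + 2*mr*zi, 2*wr, -2*wi, zi*zi - zr*zr, -2*zi*zr;
     -2*mi*zr + 2*mr*zi, 2*mi*zi + 2*mr*zr, 2*wi, 2*wr, 2*zi*zr, zi*zi - zr*zr]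

theorem toMatrix_twistorD (z w μ : ℂ) :
    LinearMap.toMatrix (b6.reindex e6) (b6.reindex e6) (twistorD z w μ).toLinearMap
      = JM z w μ := by
  ext i j
  fin_cases i <;> fin_cases j <;>
  · simp only [LinearMap.toMatrix_apply, Module.Basis.repr_reindex_apply, Module.Basis.reindex_apply]
    simp only [e6, Equiv.coe_fn_symm_mk, Matrix.cons_val_zero, Matrix.cons_val_one,
      Matrix.cons_val_two, Matrix.cons_val_three, Matrix.cons_val_four, cons_val_five,
      Matrix.head_cons, Matrix.vecHead, Matrix.vecTail, Function.comp_apply, Fin.succ]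
    simp only [b6, Module.Basis.prod_apply, Sum.elim_inl, Sum.elim_inr, Function.comp_apply,
      Complex.coe_basisOneI, Matrix.cons_val_zero, Matrix.cons_val_one, Matrix.head_cons,
      LinearMap.inl_apply, LinearMap.inr_apply, ContinuousLinearMap.coe_coe, twistorD_apply,
      Module.Basis.prod_repr_inl, Module.Basis.prod_repr_inr, Complex.coe_basisOneI_repr]
    simp [JM, pow_two, Complex.mul_re, Complex.mul_im, Matrix.cons_val_two, Matrix.cons_val_three,
      Matrix.cons_val_four, cons_val_five]
    try ring_nf

theorem det_JM (z w μ : ℂ) :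
    (JM z w μ).det = 4 * (1 - normSq μ) * (normSq z + normSq w)^4 := by
  rw [det6]
  simp only [JM, Matrix.cons_val', Matrix.cons_val_zero, Matrix.cons_val_one, Matrix.head_cons,
    Matrix.cons_val_two, Matrix.cons_val_three, Matrix.cons_val_four, cons_val_five,
    Matrix.empty_val', Matrix.cons_val_fin_one, Matrix.of_apply, Matrix.tail_cons,
    Matrix.head_fin_const, normSq_apply]
  ring

/-- The real Jacobian determinant of `Ψ` at `(z,w,μ)` is
`4(1 − |μ|²)(|z|² + |w|²)⁴`; in particular the map is an immersion at every point with
`|μ| < 1` and `(z,w) ≠ (0,0)`. -/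
theorem twistorPsi_jacobian_det (z w μ : ℂ) :
    LinearMap.det ((fderiv ℝ twistorPsi (z, w, μ)).toLinearMap)
      = 4 * (1 - normSq μ) * (normSq z + normSq w)^4 ∧
    (‖μ‖ < 1 → (z, w) ≠ (0, 0) →
      Function.Injective (fderiv ℝ twistorPsi (z, w, μ))) := by
  have hD : fderiv ℝ twistorPsi (z, w, μ) = twistorD z w μ :=
    (hasFDeriv_twistorPsi z w μ).fderiv
  have hdet : LinearMap.det ((fderiv ℝ twistorPsi (z, w, μ)).toLinearMap)
      = 4 * (1 - normSq μ) * (normSq z + normSq w)^4 := by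
    rw [hD, ← LinearMap.det_toMatrix (b6.reindex e6), toMatrix_twistorD, det_JM]
  refine ⟨hdet, fun h1 h2 => ?_⟩
  have hμ : normSq μ < 1 := by
    rw [← Complex.sq_norm]
    nlinarith [norm_nonneg μ]
  have hzw : 0 < normSq z + normSq w := by
    have : z ≠ 0 ∨ w ≠ 0 := by
      by_contra hc
      push_neg at hc
      exact h2 (by simp [hc.1, hc.2])
    rcases this with hz | hw
    · have := Complex.normSq_pos.mpr hz
      nlinarith [Complex.normSq_nonneg w]
    · have := Complex.normSq_pos.mpr hw
      nlinarith [Complex.normSq_nonneg z]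
  have hne : LinearMap.det ((fderiv ℝ twistorPsi (z, w, μ)).toLinearMap) ≠ 0 := by
    rw [hdet]
    have : (0:ℝ) < 4 * (1 - normSq μ) * (normSq z + normSq w)^4 :=
      mul_pos (mul_pos (by norm_num) (by linarith)) (pow_pos hzw 4)
    linarith
  have hker := (LinearMap.not_hasEigenvalue_zero_tfae
    ((fderiv ℝ twistorPsi (z, w, μ)).toLinearMap)).out 3 4
  exact LinearMap.ker_eq_bot.mp (hker.mp hne)
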